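/- Let H be a quasi-Turaev π-coalgebra, α ∈ π, (V, ρ_V) an α-Yetter–Drinfeld module, and for each λ ∈ π and left H_λ-module X let c_{V,X} : V ⊗ X → ^αX ⊗ V be the bijection whose inverse is ĉ_{V,X}(^αx ⊗ v) = v_{(0,0)} ⊗ v_{(1,λ)} · x. Then for all λ₁, λ₂ ∈ π, every left H_{λ₁}-module X₁ and every left H_{λ₂}-module X₂: c⁻¹_{V,X₁⊗X₂} = a_{V,X₁,X₂} ∘ (c⁻¹_{V,X₁} ⊗ id_{X₂}) ∘ a⁻¹_{^αX₁,V,X₂} ∘ (id_{^αX₁} ⊗ c⁻¹_{V,X₂}) ∘ a_{^αX₁,^αX₂,V}, i.e. the family c_{V,−} satisfies the half-braiding hexagon identity, so that (V, c_{V,−}) is an object of Z_α(Rep(H)). -/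

import Mathlib

open scoped TensorProduct
open TensorProduct

universe u v
set_option maxHeartbeats 1000000

section QH
variable (k : Type u) [Field k] {π : Type v} [Group π]
variable (H : π → Type u) [∀ a, Ring (H a)] [∀ a, Algebra k (H a)]

/-- Transport along equality of group elements, as a `k`-linear map. -/
def castL {a b : π} (e : a = b) : H a →ₗ[k] H b := by subst e; exact LinearMap.id

/-- Transport along equality of group elements, as a `k`-algebra map. -/
def castA {a b : π} (e : a = b) : H a →ₐ[k] H b := by subst e; exact AlgHom.id k _

/-- A quasi-Hopf `π`-coalgebra (quasi-Turaev group coalgebra without the crossing):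
a family of `k`-algebras `{H α}` with comultiplications `Δ_{α,β}`, counit `ε`,
invertible associators `Φ_{α,β,γ}`, antipodes `S_α` and elements `p_α, q_α`. -/
structure QuasiHopfGCoalgebra where
  /-- comultiplication -/
  Δ : ∀ a b : π, H (a * b) →ₐ[k] (H a ⊗[k] H b)
  /-- counit -/
  ε : H 1 →ₐ[k] k
  /-- the associator `Φ_{α,β,γ} ∈ H_α ⊗ H_β ⊗ H_γ` -/
  Φ : ∀ a b c : π, H a ⊗[k] (H b ⊗[k] H c)
  /-- the inverse associator -/
  Φinv : ∀ a b c : π, H a ⊗[k] (H b ⊗[k] H c)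
  Φ_mul_Φinv : ∀ a b c : π, Φ a b c * Φinv a b c = 1
  Φinv_mul_Φ : ∀ a b c : π, Φinv a b c * Φ a b c = 1
  /-- the antipode, a family of bijective `k`-linear maps -/
  S : ∀ a : π, H a ≃ₗ[k] H a⁻¹
  S_one : ∀ a : π, S a 1 = 1
  /-- the antipode is anti-multiplicative -/
  S_mul : ∀ (a : π) (x y : H a), S a (x * y) = S a y * S a x
  p : ∀ a : π, H a
  q : ∀ a : π, H a
  /-- quasi-coassociativity:
  `(id ⊗ Δ_{β,γ})Δ_{α,βγ}(h) ⬝ Φ_{α,β,γ} = Φ_{α,β,γ} ⬝ (Δ_{α,β} ⊗ id)Δ_{αβ,γ}(h)` -/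
  coassoc : ∀ (a b c : π) (h : H (a * b * c)),
    (TensorProduct.map LinearMap.id (Δ b c).toLinearMap)
        ((Δ a (b * c)) (castL k H (mul_assoc a b c) h)) * Φ a b c
      = Φ a b c *
        (TensorProduct.assoc k (H a) (H b) (H c))
          ((TensorProduct.map (Δ a b).toLinearMap LinearMap.id) ((Δ (a * b) c) h))
  /-- right counit law `(id ⊗ ε)Δ_{α,1} = id` -/
  counit_right : ∀ (a : π) (h : H a),
    (TensorProduct.rid k (H a))
      ((TensorProduct.map LinearMap.id (ε : H 1 →ₗ[k] k))
        ((Δ a 1) (castL k H (mul_one a).symm h))) = h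
  /-- left counit law `(ε ⊗ id)Δ_{1,α} = id` -/
  counit_left : ∀ (a : π) (h : H a),
    (TensorProduct.lid k (H a))
      ((TensorProduct.map (ε : H 1 →ₗ[k] k) LinearMap.id)
        ((Δ 1 a) (castL k H (one_mul a).symm h))) = h
  /-- the pentagon identity -/
  pentagon : ∀ a b c d : π,
    ((1 : H a) ⊗ₜ[k] Φ b c d) *
      (TensorProduct.map LinearMap.id
          ((TensorProduct.assoc k (H b) (H c) (H d)).toLinearMap ∘ₗ
            TensorProduct.map (Δ b c).toLinearMap LinearMap.id)
        (Φ a (b * c) d)) *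
      ((TensorProduct.map LinearMap.id (TensorProduct.assoc k (H b) (H c) (H d)).toLinearMap)
        ((TensorProduct.assoc k (H a) (H b ⊗[k] H c) (H d)) ((Φ a b c) ⊗ₜ[k] (1 : H d))))
    = (TensorProduct.map LinearMap.id
          (TensorProduct.map LinearMap.id (Δ c d).toLinearMap) (Φ a b (c * d))) *
      ((TensorProduct.assoc k (H a) (H b) (H c ⊗[k] H d))
        ((TensorProduct.map (Δ a b).toLinearMap LinearMap.id) (Φ (a * b) c d)))
  /-- normalization `(id ⊗ ε ⊗ id)(Φ_{α,1,β}) = 1 ⊗ 1` -/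
  Φ_normal : ∀ a b : π,
    (TensorProduct.map LinearMap.id
      ((TensorProduct.lid k (H b)).toLinearMap ∘ₗ
        TensorProduct.map (ε : H 1 →ₗ[k] k) LinearMap.id) (Φ a 1 b)) = (1 : H a ⊗[k] H b)
  /-- `S_α(h₁) p_{α⁻¹} h₂ = ε(h) p_{α⁻¹}` for `h ∈ H_1` -/
  antipode_p : ∀ (a : π) (h : H 1),
    (LinearMap.mul' k (H a⁻¹) ∘ₗ
        TensorProduct.map (LinearMap.mulRight k (p a⁻¹) ∘ₗ (S a).toLinearMap) LinearMap.id)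
      ((Δ a a⁻¹) (castL k H (mul_inv_cancel a).symm h)) = ε h • p a⁻¹
  /-- `h₁ q_α S_{α⁻¹}(h₂) = ε(h) q_α` for `h ∈ H_1` -/
  antipode_q : ∀ (a : π) (h : H 1),
    (LinearMap.mul' k (H a) ∘ₗ
        TensorProduct.map (LinearMap.mulRight k (q a))
          (castL k H (inv_inv a) ∘ₗ (S a⁻¹).toLinearMap))
      ((Δ a a⁻¹) (castL k H (mul_inv_cancel a).symm h)) = ε h • q a
  /-- `Y¹_α q_α S_{α⁻¹}(Y²_{α⁻¹}) p_α Y³_α = 1_α` where `Φ_{α,α⁻¹,α} = Y¹ ⊗ Y² ⊗ Y³` -/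
  antipode_Φ : ∀ a : π,
    (LinearMap.mul' k (H a) ∘ₗ
      TensorProduct.map (LinearMap.mulRight k (q a))
        (LinearMap.mul' k (H a) ∘ₗ
          TensorProduct.map
            (LinearMap.mulRight k (p a) ∘ₗ castL k H (inv_inv a) ∘ₗ (S a⁻¹).toLinearMap)
            LinearMap.id))
      (Φ a a⁻¹ a) = 1
  /-- `S_{α⁻¹}(y¹_{α⁻¹}) p_α y²_α q_α S_{α⁻¹}(y³_{α⁻¹}) = 1_α`
  where `Φ⁻¹_{α⁻¹,α,α⁻¹} = y¹ ⊗ y² ⊗ y³` -/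
  antipode_Φinv : ∀ a : π,
    (LinearMap.mul' k (H a) ∘ₗ
      TensorProduct.map
        (LinearMap.mulRight k (p a) ∘ₗ castL k H (inv_inv a) ∘ₗ (S a⁻¹).toLinearMap)
        (LinearMap.mul' k (H a) ∘ₗ
          TensorProduct.map (LinearMap.mulRight k (q a))
            (castL k H (inv_inv a) ∘ₗ (S a⁻¹).toLinearMap)))
      (Φinv a⁻¹ a a⁻¹) = 1

namespace QuasiHopfGCoalgebra
variable {k H}
variable (T : QuasiHopfGCoalgebra k H)

/-- `I^R_{α,β} = y¹_α ⊗ y²_β q_β S_{β⁻¹}(y³_{β⁻¹})` where `Φ⁻¹_{α,β,β⁻¹} = y¹ ⊗ y² ⊗ y³` -/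
noncomputable def IR (a b : π) : H a ⊗[k] H b :=
  TensorProduct.map LinearMap.id
    (LinearMap.mul' k (H b) ∘ₗ
      TensorProduct.map (LinearMap.mulRight k (T.q b))
        (castL k H (inv_inv b) ∘ₗ (T.S b⁻¹).toLinearMap))
    (T.Φinv a b b⁻¹)

/-- `J^R_{α,β} = Y¹_α ⊗ S_β⁻¹(p_{β⁻¹} Y³_{β⁻¹}) Y²_β` where `Φ_{α,β,β⁻¹} = Y¹ ⊗ Y² ⊗ Y³` -/
noncomputable def JR (a b : π) : H a ⊗[k] H b :=
  TensorProduct.map LinearMap.id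
    (LinearMap.mul' k (H b) ∘ₗ
      TensorProduct.map ((T.S b).symm.toLinearMap ∘ₗ LinearMap.mulLeft k (T.p b⁻¹))
          LinearMap.id ∘ₗ
        (TensorProduct.comm k (H b) (H b⁻¹)).toLinearMap)
    (T.Φ a b b⁻¹)

/-- `I^L_{α,β} = Y²_α S_α⁻¹(Y¹_{α⁻¹} q_{α⁻¹}) ⊗ Y³_β` where `Φ_{α⁻¹,α,β} = Y¹ ⊗ Y² ⊗ Y³` -/
noncomputable def IL (a b : π) : H a ⊗[k] H b :=
  TensorProduct.map (LinearMap.mul' k (H a)) LinearMap.id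
    ((TensorProduct.assoc k (H a) (H a) (H b)).symm
      ((TensorProduct.leftComm k (H a) (H a) (H b))
        (TensorProduct.map ((T.S a).symm.toLinearMap ∘ₗ LinearMap.mulRight k (T.q a⁻¹))
          LinearMap.id (T.Φ a⁻¹ a b))))

/-- `J^L_{α,β} = S_{α⁻¹}(y¹_{α⁻¹}) p_α y²_α ⊗ y³_β` where `Φ⁻¹_{α⁻¹,α,β} = y¹ ⊗ y² ⊗ y³` -/
noncomputable def JL (a b : π) : H a ⊗[k] H b :=
  TensorProduct.map (LinearMap.mul' k (H a)) LinearMap.id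
    ((TensorProduct.assoc k (H a) (H a) (H b)).symm
      (TensorProduct.map
        (LinearMap.mulRight k (T.p a) ∘ₗ castL k H (inv_inv a) ∘ₗ (T.S a⁻¹).toLinearMap)
        LinearMap.id (T.Φinv a⁻¹ a b)))

/-- the map `x ⊗ y ↦ Δ_{α,β}(x) ⬝ I^R_{α,β} ⬝ (1_α ⊗ S_{β⁻¹}(y))` -/
noncomputable def lmapIR (a b : π) : (H (a * b) ⊗[k] H b⁻¹) →ₗ[k] (H a ⊗[k] H b) :=
  LinearMap.mul' k (H a ⊗[k] H b) ∘ₗ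
    TensorProduct.map
      (LinearMap.mulRight k (T.IR a b) ∘ₗ (T.Δ a b).toLinearMap)
      (TensorProduct.mk k (H a) (H b) 1 ∘ₗ castL k H (inv_inv b) ∘ₗ (T.S b⁻¹).toLinearMap)

/-- the map `x ⊗ y ↦ (1_α ⊗ S_β⁻¹(y)) ⬝ J^R_{α,β} ⬝ Δ_{α,β}(x)` -/
noncomputable def lmapJR (a b : π) : (H (a * b) ⊗[k] H b⁻¹) →ₗ[k] (H a ⊗[k] H b) :=
  LinearMap.mul' k (H a ⊗[k] H b) ∘ₗ
    TensorProduct.map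
      (TensorProduct.mk k (H a) (H b) 1 ∘ₗ (T.S b).symm.toLinearMap)
      (LinearMap.mulLeft k (T.JR a b) ∘ₗ (T.Δ a b).toLinearMap) ∘ₗ
    (TensorProduct.comm k (H (a * b)) (H b⁻¹)).toLinearMap

/-- the map `x ⊗ y ↦ Δ_{α,β}(y) ⬝ I^L_{α,β} ⬝ (S_α⁻¹(x) ⊗ 1_β)` -/
noncomputable def lmapIL (a b : π) : (H a⁻¹ ⊗[k] H (a * b)) →ₗ[k] (H a ⊗[k] H b) :=
  LinearMap.mul' k (H a ⊗[k] H b) ∘ₗ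
    TensorProduct.map
      (LinearMap.mulRight k (T.IL a b) ∘ₗ (T.Δ a b).toLinearMap)
      ((TensorProduct.mk k (H a) (H b)).flip 1 ∘ₗ (T.S a).symm.toLinearMap) ∘ₗ
    (TensorProduct.comm k (H a⁻¹) (H (a * b))).toLinearMap

/-- the map `x ⊗ y ↦ (S_{α⁻¹}(x) ⊗ 1_β) ⬝ J^L_{α,β} ⬝ Δ_{α,β}(y)` -/
noncomputable def lmapJL (a b : π) : (H a⁻¹ ⊗[k] H (a * b)) →ₗ[k] (H a ⊗[k] H b) :=
  LinearMap.mul' k (H a ⊗[k] H b) ∘ₗ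
    TensorProduct.map
      ((TensorProduct.mk k (H a) (H b)).flip 1 ∘ₗ
        castL k H (inv_inv a) ∘ₗ (T.S a⁻¹).toLinearMap)
      (LinearMap.mulLeft k (T.JL a b) ∘ₗ (T.Δ a b).toLinearMap)

end QuasiHopfGCoalgebra

/-- A quasi-Turaev `π`-coalgebra: a quasi-Hopf `π`-coalgebra together with a crossing
`φ_β : H_α → H_{βαβ⁻¹}`. -/
structure QuasiTuraevGCoalgebra extends QuasiHopfGCoalgebra k H where
  /-- the crossing -/
  φ : ∀ b a : π, H a ≃ₐ[k] H (b * a * b⁻¹)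
  /-- the crossing preserves the comultiplication -/
  φ_comul : ∀ (b a c : π) (h : H (a * c)),
    TensorProduct.map (φ b a).toLinearMap (φ b c).toLinearMap ((Δ a c) h)
      = (Δ (b * a * b⁻¹) (b * c * b⁻¹))
          (castL k H (by group) ((φ b (a * c)) h))
  /-- the crossing preserves the counit -/
  φ_counit : ∀ (b : π) (h : H 1),
    ε (castL k H (by group : b * 1 * b⁻¹ = 1) ((φ b 1) h)) = ε h
  /-- the crossing is multiplicative -/
  φ_mul : ∀ (b b' a : π) (h : H a),
    castL k H (by group : b * (b' * a * b'⁻¹) * b⁻¹ = (b * b') * a * (b * b')⁻¹)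
        ((φ b (b' * a * b'⁻¹)) ((φ b' a) h))
      = (φ (b * b') a) h
  /-- the associator is invariant under the crossing -/
  φ_Φ : ∀ e t v a b c : π,
    TensorProduct.map (φ e a).toLinearMap
        (TensorProduct.map (φ t b).toLinearMap (φ v c).toLinearMap) (Φ a b c)
      = Φ (e * a * e⁻¹) (t * b * t⁻¹) (v * c * v⁻¹)

end QH

section PMapComb
/- Combinators for "parameterized linear maps" `A →ₗ[k] (M →ₗ[k] N)`: these let us build
multilinear expressions compositionally. -/
variable {k : Type u} [Field k]
variable {A B M N M' N' P Q : Type u}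
variable [AddCommGroup A] [Module k A] [AddCommGroup B] [Module k B]
variable [AddCommGroup M] [Module k M] [AddCommGroup N] [Module k N]
variable [AddCommGroup M'] [Module k M'] [AddCommGroup N'] [Module k N']
variable [AddCommGroup P] [Module k P] [AddCommGroup Q] [Module k Q]

/-- tensor product of parameterized maps -/
noncomputable def pmapTens (f : A →ₗ[k] M →ₗ[k] N) (g : B →ₗ[k] M' →ₗ[k] N') :
    (A ⊗[k] B) →ₗ[k] (M ⊗[k] M') →ₗ[k] (N ⊗[k] N') :=
  TensorProduct.homTensorHomMap (RingHom.id k) M M' N N' ∘ₗ TensorProduct.map f g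

/-- composition of parameterized maps: `(pcomp f g) (a ⊗ b) = g b ∘ₗ f a` -/
noncomputable def pcomp (f : A →ₗ[k] M →ₗ[k] N) (g : B →ₗ[k] N →ₗ[k] P) :
    (A ⊗[k] B) →ₗ[k] M →ₗ[k] P :=
  TensorProduct.lift
    ((LinearMap.lcomp k (M →ₗ[k] P) g) ∘ₗ (LinearMap.llcomp k M N P).flip ∘ₗ f)

/-- postcompose a parameterized map with a fixed map -/
noncomputable def ppost (h : N →ₗ[k] P) (f : A →ₗ[k] M →ₗ[k] N) : A →ₗ[k] M →ₗ[k] P :=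
  (LinearMap.llcomp k M N P h) ∘ₗ f

/-- precompose a parameterized map with a fixed map -/
noncomputable def ppre (h : P →ₗ[k] M) (f : A →ₗ[k] M →ₗ[k] N) : A →ₗ[k] P →ₗ[k] N :=
  (LinearMap.lcomp k N h) ∘ₗ f

/-- reparameterize -/
noncomputable def pparam (σ : B →ₗ[k] A) (f : A →ₗ[k] M →ₗ[k] N) : B →ₗ[k] M →ₗ[k] N :=
  f ∘ₗ σ

/-- act on the left tensor factor -/
noncomputable def pleft (P : Type u) [AddCommGroup P] [Module k P]
    (f : A →ₗ[k] M →ₗ[k] N) : A →ₗ[k] (M ⊗[k] P) →ₗ[k] (N ⊗[k] P) :=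
  (LinearMap.rTensorHom P) ∘ₗ f

/-- act on the right tensor factor -/
noncomputable def pright (P : Type u) [AddCommGroup P] [Module k P]
    (f : A →ₗ[k] M →ₗ[k] N) : A →ₗ[k] (P ⊗[k] M) →ₗ[k] (P ⊗[k] N) :=
  (LinearMap.lTensorHom P) ∘ₗ f

end PMapComb

section Modules
variable {k : Type u} [Field k] {π : Type v} [Group π]
variable {H : π → Type u} [∀ a, Ring (H a)] [∀ a, Algebra k (H a)]
variable (T : QuasiTuraevGCoalgebra k H)

namespace QuasiTuraevGCoalgebra

/-- The `H_{αβ}`-module structure on the tensor product of an `H_α`-module and an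
`H_β`-module, through `Δ_{α,β}`. -/
noncomputable def tensAlg {a b : π} {M N : Type u}
    [AddCommGroup M] [Module k M] [AddCommGroup N] [Module k N]
    (ρ : H a →ₐ[k] Module.End k M) (σ : H b →ₐ[k] Module.End k N) :
    H (a * b) →ₐ[k] Module.End k (M ⊗[k] N) :=
  ((Module.endTensorEndAlgHom (R := k) (S := k) (A := k) (M := M) (N := N)).comp
      (Algebra.TensorProduct.map ρ σ)).comp (T.Δ a b)

/-- The conjugate module `^βX`: `X` with the `H_{βαβ⁻¹}`-action `h · x = φ_{β⁻¹}(h) · x`. -/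
noncomputable def conjAlg {a : π} {X : Type u} [AddCommGroup X] [Module k X]
    (ρ : H a →ₐ[k] Module.End k X) (b : π) :
    H (b * a * b⁻¹) →ₐ[k] Module.End k X :=
  (ρ.comp (castA k H (by group : b⁻¹ * (b * a * b⁻¹) * b⁻¹⁻¹ = a))).comp
    (T.φ b⁻¹ (b * a * b⁻¹)).toAlgHom

/-- Evaluation of an action: `H_α ⊗ X → X`. -/
noncomputable def aev {a : π} {X : Type u} [AddCommGroup X] [Module k X]
    (ρ : H a →ₐ[k] Module.End k X) : (H a ⊗[k] X) →ₗ[k] X :=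
  TensorProduct.lift ρ.toLinearMap

/-- The associativity constraint of `Rep(H)`: multiplication by `Φ_{α,β,γ}` composed with
the canonical vector space isomorphism. -/
noncomputable def assocMod {a b c : π} {M₁ M₂ M₃ : Type u}
    [AddCommGroup M₁] [Module k M₁] [AddCommGroup M₂] [Module k M₂]
    [AddCommGroup M₃] [Module k M₃]
    (ρ₁ : H a →ₐ[k] Module.End k M₁) (ρ₂ : H b →ₐ[k] Module.End k M₂)
    (ρ₃ : H c →ₐ[k] Module.End k M₃) :
    ((M₁ ⊗[k] M₂) ⊗[k] M₃) →ₗ[k] (M₁ ⊗[k] (M₂ ⊗[k] M₃)) :=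
  (pmapTens ρ₁.toLinearMap (pmapTens ρ₂.toLinearMap ρ₃.toLinearMap) (T.Φ a b c)) ∘ₗ
    (TensorProduct.assoc k M₁ M₂ M₃).toLinearMap

/-- The inverse associativity constraint of `Rep(H)`. -/
noncomputable def assocModInv {a b c : π} {M₁ M₂ M₃ : Type u}
    [AddCommGroup M₁] [Module k M₁] [AddCommGroup M₂] [Module k M₂]
    [AddCommGroup M₃] [Module k M₃]
    (ρ₁ : H a →ₐ[k] Module.End k M₁) (ρ₂ : H b →ₐ[k] Module.End k M₂)
    (ρ₃ : H c →ₐ[k] Module.End k M₃) :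
    (M₁ ⊗[k] (M₂ ⊗[k] M₃)) →ₗ[k] ((M₁ ⊗[k] M₂) ⊗[k] M₃) :=
  (TensorProduct.assoc k M₁ M₂ M₃).symm.toLinearMap ∘ₗ
    (pmapTens ρ₁.toLinearMap (pmapTens ρ₂.toLinearMap ρ₃.toLinearMap) (T.Φinv a b c))

end QuasiTuraevGCoalgebra
end Modules

section YD
variable {k : Type u} [Field k] {π : Type v} [Group π]
variable {H : π → Type u} [∀ a, Ring (H a)] [∀ a, Algebra k (H a)]

namespace QuasiTuraevGCoalgebra
variable (T : QuasiTuraevGCoalgebra k H)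
variable {a : π} {V : Type u} [AddCommGroup V] [Module k V]

/-- Counitarity `(id ⊗ ε) ∘ ρ_{V,1} = id` of a coaction family. -/
def ydCounitProp (coact : ∀ l : π, V →ₗ[k] V ⊗[k] H l) : Prop :=
  ∀ v : V,
    (TensorProduct.rid k V)
      ((TensorProduct.map LinearMap.id (T.ε : H 1 →ₗ[k] k)) (coact 1 v)) = v

/-- The left-hand side of the Yetter-Drinfeld quasi-coassociativity axiom, as a linear map:
`v ↦ (y²_α·v₍₀,₀₎)₍₀,₀₎ ⊗ ((y²_α·v₍₀,₀₎)₍₁,λ₁₎ y¹_{λ₁} ⊗ y³_{λ₂} v₍₁,λ₂₎)`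
where `y¹ ⊗ y² ⊗ y³ = Φ⁻¹_{λ₁,α,λ₂}`. -/
noncomputable def ydCoassocLHS (ρ : H a →ₐ[k] Module.End k V)
    (coact : ∀ l : π, V →ₗ[k] V ⊗[k] H l) (l₁ l₂ : π) :
    V →ₗ[k] V ⊗[k] (H l₁ ⊗[k] H l₂) :=
  (TensorProduct.assoc k V (H l₁) (H l₂)).toLinearMap ∘ₗ
    ((pparam
        ((TensorProduct.assoc k (H a) (H l₁) (H l₂)).symm.toLinearMap ∘ₗ
          (TensorProduct.leftComm k (H l₁) (H a) (H l₂)).toLinearMap)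
        (pmapTens
          (pcomp ((LinearMap.llcomp k V V (V ⊗[k] H l₁) (coact l₁)) ∘ₗ ρ.toLinearMap)
            (pright V ((LinearMap.mul k (H l₁)).flip)))
          (LinearMap.mul k (H l₂))))
      (T.Φinv l₁ a l₂)) ∘ₗ
    coact l₂

/-- The right-hand side of the Yetter-Drinfeld quasi-coassociativity axiom, as a linear map:
`v ↦ Φ⁻¹_{α,λ₁,λ₂} ⬝ [(ȳ³_α·v)₍₀,₀₎ ⊗ ((ȳ³_α·v)₍₁,λ₁λ₂₎₍₁,λ₁₎ ȳ¹_{λ₁} ⊗ (ȳ³_α·v)₍₁,λ₁λ₂₎₍₂,λ₂₎ ȳ²_{λ₂})]`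
where `ȳ¹ ⊗ ȳ² ⊗ ȳ³ = Φ⁻¹_{λ₁,λ₂,α}`. -/
noncomputable def ydCoassocRHS (ρ : H a →ₐ[k] Module.End k V)
    (coact : ∀ l : π, V →ₗ[k] V ⊗[k] H l) (l₁ l₂ : π) :
    V →ₗ[k] V ⊗[k] (H l₁ ⊗[k] H l₂) :=
  ((pmapTens ρ.toLinearMap
      (pmapTens (Algebra.lmul k (H l₁)).toLinearMap (Algebra.lmul k (H l₂)).toLinearMap))
    (T.Φinv a l₁ l₂)) ∘ₗ
  ((pparam
      ((LinearMap.lTensor (H a) (TensorProduct.comm k (H l₂) (H l₁)).toLinearMap) ∘ₗ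
        (TensorProduct.leftComm k (H l₂) (H a) (H l₁)).toLinearMap ∘ₗ
        (TensorProduct.assoc k (H l₂) (H a) (H l₁)).toLinearMap ∘ₗ
        (TensorProduct.comm k (H l₁) (H l₂ ⊗[k] H a)).toLinearMap)
      (pcomp
        ((LinearMap.llcomp k V V (V ⊗[k] (H l₁ ⊗[k] H l₂))
            ((LinearMap.lTensor V (T.Δ l₁ l₂).toLinearMap) ∘ₗ coact (l₁ * l₂))) ∘ₗ
          ρ.toLinearMap)
        (pright V
          (pmapTens ((LinearMap.mul k (H l₁)).flip) ((LinearMap.mul k (H l₂)).flip)))))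
    (T.Φinv l₁ l₂ a))

/-- The Yetter-Drinfeld quasi-coassociativity axiom. -/
def ydCoassocProp (ρ : H a →ₐ[k] Module.End k V)
    (coact : ∀ l : π, V →ₗ[k] V ⊗[k] H l) : Prop :=
  ∀ l₁ l₂ : π, ydCoassocLHS T ρ coact l₁ l₂ = ydCoassocRHS T ρ coact l₁ l₂

/-- The right-hand side of the Yetter-Drinfeld compatibility axiom, as a map parameterized
by `Δ_{αβα⁻¹,α}(h)`: `(h₁ ⊗ h₂) ↦ (v ↦ (h₂·v)₍₀,₀₎ ⊗ (h₂·v)₍₁,β₎ φ_{α⁻¹}(h₁))`. -/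
noncomputable def ydCompatRHS (ρ : H a →ₐ[k] Module.End k V)
    {b : π} (coactb : V →ₗ[k] V ⊗[k] H b) :
    (H (a * b * a⁻¹) ⊗[k] H a) →ₗ[k] V →ₗ[k] V ⊗[k] H b :=
  pparam (TensorProduct.comm k (H (a * b * a⁻¹)) (H a)).toLinearMap
    (pcomp ((LinearMap.llcomp k V V (V ⊗[k] H b) coactb) ∘ₗ ρ.toLinearMap)
      (pright V
        ((LinearMap.mul k (H b)).flip ∘ₗ
          castL k H (by group : a⁻¹ * (a * b * a⁻¹) * a⁻¹⁻¹ = b) ∘ₗ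
          (T.φ a⁻¹ (a * b * a⁻¹)).toLinearMap)))

/-- The Yetter-Drinfeld compatibility axiom:
`h₍₁,α₎·v₍₀,₀₎ ⊗ h₍₂,β₎ v₍₁,β₎ = (h₍₂,α₎·v)₍₀,₀₎ ⊗ (h₍₂,α₎·v)₍₁,β₎ φ_{α⁻¹}(h₍₁,αβα⁻¹₎)`. -/
def ydCompatProp (ρ : H a →ₐ[k] Module.End k V)
    (coact : ∀ l : π, V →ₗ[k] V ⊗[k] H l) : Prop :=
  ∀ (b : π) (h : H (a * b)) (v : V),
    (T.tensAlg ρ (Algebra.lmul k (H b))) h (coact b v)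
      = (ydCompatRHS T ρ (coact b))
          ((T.Δ (a * b * a⁻¹) a)
            (castA k H (by group : a * b = a * b * a⁻¹ * a) h)) v

/-- `V` is an `α`-Yetter-Drinfeld module over `T` (relative to the `H_α`-action `ρ` and
the coaction family `coact`). -/
def IsYD (ρ : H a →ₐ[k] Module.End k V)
    (coact : ∀ l : π, V →ₗ[k] V ⊗[k] H l) : Prop :=
  ydCounitProp T coact ∧ ydCoassocProp T ρ coact ∧ ydCompatProp T ρ coact

end QuasiTuraevGCoalgebra
end YD

section Braid
variable {k : Type u} [Field k] {π : Type v} [Group π]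
variable {H : π → Type u} [∀ a, Ring (H a)] [∀ a, Algebra k (H a)]

namespace QuasiTuraevGCoalgebra
variable (T : QuasiTuraevGCoalgebra k H)
variable {a : π} {V : Type u} [AddCommGroup V] [Module k V]

/-- For an `α`-Yetter-Drinfeld module `V` and a left `H_λ`-module `X`, the map
`ĉ_{V,X} : ^αX ⊗ V → V ⊗ X`, `x ⊗ v ↦ v₍₀,₀₎ ⊗ v₍₁,λ₎ · x`. -/
noncomputable def ydBraidInv {l : π} {X : Type u} [AddCommGroup X] [Module k X]
    (coact : ∀ l : π, V →ₗ[k] V ⊗[k] H l) (ρX : H l →ₐ[k] Module.End k X) :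
    (X ⊗[k] V) →ₗ[k] (V ⊗[k] X) :=
  (LinearMap.lTensor V (aev ρX)) ∘ₗ
    (TensorProduct.assoc k V (H l) X).toLinearMap ∘ₗ
    (LinearMap.rTensor X (coact l)) ∘ₗ
    (TensorProduct.comm k X V).toLinearMap

/-- For an `α`-Yetter-Drinfeld module `V` and a left `H_λ`-module `X`, the map
`c_{V,X} : V ⊗ X → ^αX ⊗ V` given by
`v ⊗ x ↦ ^α[J¹₍₁,λ₎ y¹_λ S_{λ⁻¹}(J²_{λ⁻¹} y³_{λ⁻¹} (Ĩ²_α·v)₍₁,λ⁻¹₎ Ĩ¹_{λ⁻¹}) · x]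
⊗ J¹₍₂,α₎ y²_α · (Ĩ²_α·v)₍₀,₀₎`, where `Ĩ¹ ⊗ Ĩ² = I^L_{λ⁻¹,α}`,
`J¹ ⊗ J² = J^R_{λα,λ⁻¹}` and `y¹ ⊗ y² ⊗ y³ = Φ⁻¹_{λ,α,λ⁻¹}`. -/
noncomputable def ydBraid {l : π} {X : Type u} [AddCommGroup X] [Module k X]
    (ρV : H a →ₐ[k] Module.End k V) (coact : ∀ l : π, V →ₗ[k] V ⊗[k] H l)
    (ρX : H l →ₐ[k] Module.End k X) :
    (V ⊗[k] X) →ₗ[k] (X ⊗[k] V) :=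
  ((pparam (TensorProduct.leftComm k (H l) (H a) (H l⁻¹)).toLinearMap
      (ppost (TensorProduct.comm k V X).toLinearMap
        (pmapTens ρV.toLinearMap
          (ppost (aev ρX)
            (pleft X
              (pparam (TensorProduct.comm k (H l) (H l⁻¹)).toLinearMap
                (pcomp
                  (ppost (castL k H (inv_inv l) ∘ₗ (T.S l⁻¹).toLinearMap)
                    (LinearMap.mul k (H l⁻¹)))
                  (LinearMap.mul k (H l)))))))))
    (((TensorProduct.assoc k (H l) (H a) (H l⁻¹)).toLinearMap
        ((LinearMap.rTensor (H l⁻¹) (T.Δ l a).toLinearMap) (T.JR (l * a) l⁻¹))) *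
      T.Φinv l a l⁻¹)) ∘ₗ
  (TensorProduct.assoc k V (H l⁻¹) X).toLinearMap ∘ₗ
  (LinearMap.rTensor X
    ((pparam (TensorProduct.comm k (H l⁻¹) (H a)).toLinearMap
        (pcomp ((LinearMap.llcomp k V V (V ⊗[k] H l⁻¹) (coact l⁻¹)) ∘ₗ ρV.toLinearMap)
          (pright V ((LinearMap.mul k (H l⁻¹)).flip))))
      (T.IL l⁻¹ a)))

/-- The coaction of the conjugate Yetter-Drinfeld module `^βV`:
`ρ_{^βV,λ}(v) = v₍₀,₀₎ ⊗ φ_β(v₍₁,β⁻¹λβ₎)`. -/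
noncomputable def conjCoact (coact : ∀ l : π, V →ₗ[k] V ⊗[k] H l) (b : π) :
    ∀ l : π, V →ₗ[k] V ⊗[k] H l :=
  fun l =>
    (LinearMap.lTensor V
      (castL k H (by group : b * (b⁻¹ * l * b) * b⁻¹ = l) ∘ₗ
        (T.φ b (b⁻¹ * l * b)).toLinearMap)) ∘ₗ
    coact (b⁻¹ * l * b)

variable {b : π} {W : Type u} [AddCommGroup W] [Module k W]

/-- The coaction of the tensor product of an `α`-Yetter-Drinfeld module `V` and a
`β`-Yetter-Drinfeld module `W`:
`ρ_{V⊗W,λ}(v ⊗ w) = t¹_α Y¹_α · (y²_α·v)₍₀,₀₎ ⊗ t²_β · (Y³_β y³_β·w)₍₀,₀₎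
  ⊗ t³_λ (Y³_β y³_β·w)₍₁,λ₎ Y²_λ φ_{β⁻¹}((y²_α·v)₍₁,βλβ⁻¹₎) y¹_λ`
where `t = Φ⁻¹_{α,β,λ}`, `Y = Φ_{α,λ,β}` and `y = Φ⁻¹_{λ,α,β}`. -/
noncomputable def ydTensorCoact (ρV : H a →ₐ[k] Module.End k V)
    (coactV : ∀ l : π, V →ₗ[k] V ⊗[k] H l)
    (ρW : H b →ₐ[k] Module.End k W)
    (coactW : ∀ l : π, W →ₗ[k] W ⊗[k] H l) (l : π) :
    (V ⊗[k] W) →ₗ[k] (V ⊗[k] W) ⊗[k] H l :=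
  (TensorProduct.assoc k V W (H l)).symm.toLinearMap ∘ₗ
  -- stage `t = Φ⁻¹_{α,β,λ}` : `t¹` acts on `V`, `t²` acts on `W`, `t³` multiplies on the left
  ((pmapTens ρV.toLinearMap (pmapTens ρW.toLinearMap (LinearMap.mul k (H l))))
    (T.Φinv a b l)) ∘ₗ
  -- stage `Y = Φ_{α,λ,β}` : `Y¹` acts on `V`; `Y²` multiplies on the left; then `Y³` acts
  -- on `W`, the coaction `ρ_{W,λ}` is applied, and `(…·w)₍₁,λ₎` multiplies on the left
  ((pmapTens ρV.toLinearMap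
      (pcomp (pright W (LinearMap.mul k (H l)))
        (ppost
          ((LinearMap.lTensor W (LinearMap.mul' k (H l))) ∘ₗ
            (TensorProduct.assoc k W (H l) (H l)).toLinearMap)
          (pleft (H l)
            ((LinearMap.llcomp k W W (W ⊗[k] H l) (coactW l)) ∘ₗ ρW.toLinearMap)))))
    (T.Φ a l b)) ∘ₗ
  -- stage `y = Φ⁻¹_{λ,α,β}` : `y²` acts on `V` followed by `ρ_{V,βλβ⁻¹}`, whose second leg
  -- is pushed through `φ_{β⁻¹}` and multiplied on the left of `y¹`; `y³` acts on `W`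
  ((pparam
      ((LinearMap.lTensor (H a) (TensorProduct.comm k (H l) (H b)).toLinearMap) ∘ₗ
        (TensorProduct.leftComm k (H l) (H a) (H b)).toLinearMap)
      (ppost
        ((LinearMap.lTensor V (LinearMap.lTensor W (LinearMap.mul' k (H l)))) ∘ₗ
          (LinearMap.lTensor V (TensorProduct.leftComm k (H l) W (H l)).toLinearMap) ∘ₗ
          (TensorProduct.assoc k V (H l) (W ⊗[k] H l)).toLinearMap ∘ₗ
          (LinearMap.rTensor (W ⊗[k] H l)
            (LinearMap.lTensor V
              (castL k H (by group : b⁻¹ * (b * l * b⁻¹) * b⁻¹⁻¹ = l) ∘ₗ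
                (T.φ b⁻¹ (b * l * b⁻¹)).toLinearMap))))
        (pmapTens
          ((LinearMap.llcomp k V V (V ⊗[k] H (b * l * b⁻¹)) (coactV (b * l * b⁻¹))) ∘ₗ
            ρV.toLinearMap)
          (ppre (TensorProduct.rid k W).symm.toLinearMap
            (pmapTens ρW.toLinearMap
              ((LinearMap.ringLmapEquivSelf k k (H l)).symm.toLinearMap))))))
    (T.Φinv l a b))

end QuasiTuraevGCoalgebra
end Braid

section HB
variable {k : Type u} [Field k] {π : Type v} [Group π]
variable {H : π → Type u} [∀ a, Ring (H a)] [∀ a, Algebra k (H a)]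
variable (T : QuasiTuraevGCoalgebra k H)

open QuasiTuraevGCoalgebra

/-- A half-braiding on a left `H_α`-module `V`: a natural family of `H_{αλ}`-linear
isomorphisms `c_{V,X} : V ⊗ X → ^αX ⊗ V` satisfying the hexagon identity. A pair
`(V, c_{V,-})` is an object of the `α`-th component `Z_α(Rep(H))` of the center of
`Rep(H)`. -/
structure HalfBraiding (a : π) (V : Type u) [AddCommGroup V] [Module k V]
    (ρV : H a →ₐ[k] Module.End k V) where
  /-- the underlying `k`-linear isomorphisms `c_{V,X}` -/
  braid : ∀ (l : π) (X : Type u) [AddCommGroup X] [Module k X]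
    (ρX : H l →ₐ[k] Module.End k X), (V ⊗[k] X) ≃ₗ[k] (X ⊗[k] V)
  /-- `c_{V,X}` is `H_{αλ}`-linear -/
  hlinear : ∀ (l : π) (X : Type u) [AddCommGroup X] [Module k X]
    (ρX : H l →ₐ[k] Module.End k X) (h : H (a * l)) (t : V ⊗[k] X),
    braid l X ρX ((T.tensAlg ρV ρX h) t)
      = (T.tensAlg (T.conjAlg ρX a) ρV
          (castA k H (by group : a * l = a * l * a⁻¹ * a) h)) (braid l X ρX t)
  /-- `c_{V,-}` is natural -/
  hnatural : ∀ (l : π) (X X' : Type u) [AddCommGroup X] [Module k X]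
    [AddCommGroup X'] [Module k X']
    (ρX : H l →ₐ[k] Module.End k X) (ρX' : H l →ₐ[k] Module.End k X')
    (g : X →ₗ[k] X'), (∀ (h : H l) (x : X), g (ρX h x) = ρX' h (g x)) →
    ∀ t : V ⊗[k] X,
      braid l X' ρX' ((LinearMap.lTensor V g) t)
        = (LinearMap.rTensor V g) (braid l X ρX t)
  /-- the hexagon identity
  `c_{V,X₁⊗X₂} = a⁻¹_{^αX₁,^αX₂,V} ∘ (id ⊗ c_{V,X₂}) ∘ a_{^αX₁,V,X₂} ∘ (c_{V,X₁} ⊗ id) ∘ a⁻¹_{V,X₁,X₂}` -/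
  hhexagon : ∀ (l₁ l₂ : π) (X₁ X₂ : Type u) [AddCommGroup X₁] [Module k X₁]
    [AddCommGroup X₂] [Module k X₂]
    (ρ₁ : H l₁ →ₐ[k] Module.End k X₁) (ρ₂ : H l₂ →ₐ[k] Module.End k X₂),
    (braid (l₁ * l₂) (X₁ ⊗[k] X₂) (T.tensAlg ρ₁ ρ₂)).toLinearMap
      = T.assocModInv (T.conjAlg ρ₁ a) (T.conjAlg ρ₂ a) ρV ∘ₗ
        LinearMap.lTensor X₁ (braid l₂ X₂ ρ₂).toLinearMap ∘ₗ
        T.assocMod (T.conjAlg ρ₁ a) ρV ρ₂ ∘ₗ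
        LinearMap.rTensor X₂ (braid l₁ X₁ ρ₁).toLinearMap ∘ₗ
        T.assocModInv ρV ρ₁ ρ₂

end HB

section HB2
variable {k : Type u} [Field k] {π : Type v} [Group π]
variable {H : π → Type u} [∀ a, Ring (H a)] [∀ a, Algebra k (H a)]
variable {T : QuasiTuraevGCoalgebra k H}

/-- The coaction induced by a half-braiding: `ρ_{V,λ}(v) = c⁻¹_{V,H_λ}(^α1_λ ⊗ v)`. -/
noncomputable def HalfBraiding.coactOf {a : π} {V : Type u} [AddCommGroup V] [Module k V]
    {ρV : H a →ₐ[k] Module.End k V} (hb : HalfBraiding T a V ρV) :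
    ∀ l : π, V →ₗ[k] V ⊗[k] H l :=
  fun l =>
    (hb.braid l (H l) (Algebra.lmul k (H l))).symm.toLinearMap ∘ₗ
      TensorProduct.mk k (H l) V 1

end HB2


set_option linter.unusedSectionVars false
set_option linter.unusedVariables false
section AuxCombinators
variable {k : Type u} [Field k]
variable {A B M N M' N' P Q : Type u}
variable [AddCommGroup A] [Module k A] [AddCommGroup B] [Module k B]
variable [AddCommGroup M] [Module k M] [AddCommGroup N] [Module k N]
variable [AddCommGroup M'] [Module k M'] [AddCommGroup N'] [Module k N']
variable [AddCommGroup P] [Module k P] [AddCommGroup Q] [Module k Q]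

@[simp] lemma pmapTens_tmul (f : A →ₗ[k] M →ₗ[k] N) (g : B →ₗ[k] M' →ₗ[k] N')
    (x : A) (y : B) : pmapTens f g (x ⊗ₜ[k] y) = TensorProduct.map (f x) (g y) := by
  simp [pmapTens, TensorProduct.homTensorHomMap]

@[simp] lemma pcomp_tmul (f : A →ₗ[k] M →ₗ[k] N) (g : B →ₗ[k] N →ₗ[k] P)
    (x : A) (y : B) : pcomp f g (x ⊗ₜ[k] y) = g y ∘ₗ f x := by
  simp [pcomp]; rfl

@[simp] lemma ppost_apply (h : N →ₗ[k] P) (f : A →ₗ[k] M →ₗ[k] N) (x : A) :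
    ppost h f x = h ∘ₗ f x := rfl

@[simp] lemma ppre_apply (h : P →ₗ[k] M) (f : A →ₗ[k] M →ₗ[k] N) (x : A) :
    ppre h f x = f x ∘ₗ h := rfl

@[simp] lemma pparam_apply (σ : B →ₗ[k] A) (f : A →ₗ[k] M →ₗ[k] N) (x : B) :
    pparam σ f x = f (σ x) := rfl

@[simp] lemma pleft_apply (f : A →ₗ[k] M →ₗ[k] N) (x : A) :
    pleft P f x = LinearMap.rTensor P (f x) := rfl

@[simp] lemma pright_apply (f : A →ₗ[k] M →ₗ[k] N) (x : A) :
    pright P f x = LinearMap.lTensor P (f x) := rfl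

end AuxCombinators

section AuxCast
variable {k : Type u} [Field k] {π : Type v} [Group π]
variable {H : π → Type u} [∀ a, Ring (H a)] [∀ a, Algebra k (H a)]

lemma castL_castL {a b c : π} (e : a = b) (e' : b = c) (x : H a) :
    castL k H e' (castL k H e x) = castL k H (e.trans e') x := by
  subst e; subst e'; rfl

@[simp] lemma castL_refl {a : π} (e : a = a) : castL k H e = LinearMap.id := rfl

lemma castA_toLinearMap {a b : π} (e : a = b) :
    (castA k H e).toLinearMap = castL k H e := by subst e; rfl
end AuxCast

section AuxPhi
variable {k : Type u} [Field k] {π : Type v} [Group π]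
variable {H : π → Type u} [∀ a, Ring (H a)] [∀ a, Algebra k (H a)]
variable (T : QuasiTuraevGCoalgebra k H)

lemma phi_subscript {b b' : π} (e : b = b') (c : π)
    (e2 : b * c * b⁻¹ = b' * c * b'⁻¹) (h : H c) :
    castL k H e2 (T.φ b c h) = T.φ b' c h := by
  subst e; rfl

lemma phi_one (c : π) (e : 1 * c * 1⁻¹ = c) (h : H c) :
    castL k H e (T.φ 1 c h) = h := by
  have key : ∀ (c' : π) (g : H (1 * c' * 1⁻¹)),
      castL k H (by group : 1 * (1 * c' * 1⁻¹) * 1⁻¹ = 1 * c' * 1⁻¹)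
        (T.φ 1 (1 * c' * 1⁻¹) g) = g := by
    intro c' g
    have hg : T.φ 1 c' ((T.φ 1 c').symm g) = g := (T.φ 1 c').apply_symm_apply g
    set h0 := (T.φ 1 c').symm g with hh0
    have hm := T.φ_mul 1 1 c' h0
    have hs := phi_subscript T (mul_one (1:π)) c'
      (by group : (1*1) * c' * (1*1)⁻¹ = 1 * c' * 1⁻¹) h0
    -- hm : castL _ (φ 1 (1*c'*1⁻¹) (φ 1 c' h0)) = φ (1*1) c' h0
    have := congrArg (castL k H
      (by group : (1*1) * c' * (1*1)⁻¹ = 1 * c' * 1⁻¹)) hm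
    rw [castL_castL, hs] at this
    rw [← hg]
    exact this
  -- transport from index 1*c*1⁻¹ to c
  have tr : ∀ (d c : π) (ed : d = c)
      (_ : ∀ g : H d, castL k H (by group : 1 * d * 1⁻¹ = d) (T.φ 1 d g) = g)
      (h : H c) (e2 : 1 * c * 1⁻¹ = c), castL k H e2 (T.φ 1 c h) = h := by
    intro d c ed hd h e2
    subst ed
    exact hd h
  exact tr (1 * c * 1⁻¹) c (by group) (key c) h e

lemma chi_phi (a c : π) (e : a⁻¹ * (a * c * a⁻¹) * a⁻¹⁻¹ = c) (h : H c) :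
    castL k H e (T.φ a⁻¹ (a * c * a⁻¹) (T.φ a c h)) = h := by
  have hm := T.φ_mul a⁻¹ a c h
  have hs := phi_subscript T (inv_mul_cancel a) c
    (by group : (a⁻¹*a) * c * (a⁻¹*a)⁻¹ = 1 * c * 1⁻¹) h
  have h1 := phi_one T c (by group : 1 * c * 1⁻¹ = c) h
  have := congrArg (castL k H
    (by group : (a⁻¹*a) * c * (a⁻¹*a)⁻¹ = 1 * c * 1⁻¹)) hm
  rw [castL_castL, hs] at this
  have := congrArg (castL k H (by group : 1 * c * 1⁻¹ = c)) this
  rw [castL_castL, h1] at this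
  exact this

/-- the linear conjugation map `χ_c = castL ∘ φ_{a⁻¹} : H_{aca⁻¹} → H_c` -/
noncomputable def chiL (a c : π) : H (a * c * a⁻¹) →ₗ[k] H c :=
  castL k H (by group : a⁻¹ * (a * c * a⁻¹) * a⁻¹⁻¹ = c) ∘ₗ
    (T.φ a⁻¹ (a * c * a⁻¹)).toLinearMap

lemma chiL_phi (a c : π) : chiL T a c ∘ₗ (T.φ a c).toLinearMap = LinearMap.id := by
  apply LinearMap.ext; intro h
  exact chi_phi T a c _ h

lemma phi_one_lin (c : π) (e : 1 * c * 1⁻¹ = c) :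
    castL k H e ∘ₗ (T.φ 1 c).toLinearMap = LinearMap.id := by
  apply LinearMap.ext; intro h
  exact phi_one T c e h

lemma cast_Φ {x1 x2 x3 y1 y2 y3 : π} (e1 : x1 = y1) (e2 : x2 = y2) (e3 : x3 = y3) :
    TensorProduct.map (castL k H e1)
      (TensorProduct.map (castL k H e2) (castL k H e3)) (T.Φ x1 x2 x3)
      = T.Φ y1 y2 y3 := by
  subst e1; subst e2; subst e3
  simp

end AuxPhi

section AuxPhiConj
variable {k : Type u} [Field k] {π : Type v} [Group π]
variable {H : π → Type u} [∀ a, Ring (H a)] [∀ a, Algebra k (H a)]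
variable (T : QuasiTuraevGCoalgebra k H)

lemma Phi_conj_up2 (a b c : π) :
    T.Φ (a*b*a⁻¹) (a*c*a⁻¹) a
      = TensorProduct.map (T.φ a b).toLinearMap
          (TensorProduct.map (T.φ a c).toLinearMap LinearMap.id) (T.Φ b c a) := by
  have h := T.φ_Φ a a 1 b c a
  have h2 := congrArg (TensorProduct.map LinearMap.id
    (TensorProduct.map LinearMap.id (castL k H (by group : 1*a*1⁻¹ = a)))) h
  rw [← LinearMap.comp_apply, ← TensorProduct.map_comp, ← TensorProduct.map_comp,
    LinearMap.id_comp, LinearMap.id_comp, phi_one_lin] at h2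
  have h3 := cast_Φ T (rfl : a*b*a⁻¹ = a*b*a⁻¹) (rfl : a*c*a⁻¹ = a*c*a⁻¹)
    (by group : 1*a*1⁻¹ = a)
  simp only [castL_refl] at h3
  rw [h3] at h2
  exact h2.symm

lemma Phi_conj_up1 (a b c : π) :
    T.Φ (a*b*a⁻¹) a c
      = TensorProduct.map (T.φ a b).toLinearMap LinearMap.id (T.Φ b a c) := by
  have h := T.φ_Φ a 1 1 b a c
  have h2 := congrArg (TensorProduct.map LinearMap.id
    (TensorProduct.map (castL k H (by group : 1*a*1⁻¹ = a))
      (castL k H (by group : 1*c*1⁻¹ = c)))) h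
  rw [← LinearMap.comp_apply, ← TensorProduct.map_comp, ← TensorProduct.map_comp,
    LinearMap.id_comp, phi_one_lin, phi_one_lin] at h2
  have h3 := cast_Φ T (rfl : a*b*a⁻¹ = a*b*a⁻¹) (by group : 1*a*1⁻¹ = a)
    (by group : 1*c*1⁻¹ = c)
  simp only [castL_refl] at h3
  rw [h3, TensorProduct.map_id] at h2
  exact h2.symm

lemma N1 (a l₁ l₂ : π) :
    TensorProduct.map (chiL T a l₁) (TensorProduct.map (chiL T a l₂) LinearMap.id)
      (T.Φ (a*l₁*a⁻¹) (a*l₂*a⁻¹) a) = T.Φ l₁ l₂ a := by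
  rw [Phi_conj_up2 T a l₁ l₂, ← LinearMap.comp_apply, ← TensorProduct.map_comp,
    ← TensorProduct.map_comp, chiL_phi, chiL_phi, LinearMap.id_comp]
  simp

/-- the algebra version of `chiL` -/
noncomputable def chiA (a c : π) : H (a * c * a⁻¹) →ₐ[k] H c :=
  (castA k H (by group : a⁻¹ * (a * c * a⁻¹) * a⁻¹⁻¹ = c)).comp
    (T.φ a⁻¹ (a * c * a⁻¹)).toAlgHom

lemma chiA_toLin (a c : π) : (chiA T a c).toLinearMap = chiL T a c := by
  unfold chiA chiL
  rw [AlgHom.comp_toLinearMap, castA_toLinearMap]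
  rfl

lemma N2 (a l₁ l₂ : π) :
    TensorProduct.map (chiL T a l₁) LinearMap.id
      (T.Φinv (a*l₁*a⁻¹) a l₂) = T.Φinv l₁ a l₂ := by
  set Θ := Algebra.TensorProduct.map (chiA T a l₁) (AlgHom.id k (H a ⊗[k] H l₂)) with hΘ
  have theta_lin : Θ.toLinearMap = TensorProduct.map (chiL T a l₁) LinearMap.id := by
    apply TensorProduct.ext'
    intro x y
    simp [hΘ, ← chiA_toLin]
  have hN2Φ : TensorProduct.map (chiL T a l₁) LinearMap.id (T.Φ (a*l₁*a⁻¹) a l₂)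
      = T.Φ l₁ a l₂ := by
    rw [Phi_conj_up1 T a l₁ l₂, ← LinearMap.comp_apply, ← TensorProduct.map_comp,
      chiL_phi, LinearMap.id_comp]
    simp
  have hΦ : Θ (T.Φ (a*l₁*a⁻¹) a l₂) = T.Φ l₁ a l₂ := by
    have : Θ (T.Φ (a*l₁*a⁻¹) a l₂) = Θ.toLinearMap (T.Φ (a*l₁*a⁻¹) a l₂) := rfl
    rw [this, theta_lin]; exact hN2Φ
  have h1 : Θ (T.Φinv (a*l₁*a⁻¹) a l₂) * T.Φ l₁ a l₂ = 1 := by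
    rw [← hΦ, ← map_mul, T.Φinv_mul_Φ, map_one]
  have h2 : T.Φ l₁ a l₂ * T.Φinv l₁ a l₂ = 1 := T.Φ_mul_Φinv _ _ _
  have := left_inv_eq_right_inv h1 h2
  rw [← theta_lin]
  exact this

end AuxPhiConj

section MainAux
variable {k : Type u} [Field k] {π : Type v} [Group π]
variable {H : π → Type u} [∀ a, Ring (H a)] [∀ a, Algebra k (H a)]
variable (T : QuasiTuraevGCoalgebra k H) {a : π} {V : Type u}
  [AddCommGroup V] [Module k V]

/-- a generic ext principle for maps out of `A ⊗ (B ⊗ C)` -/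
lemma ext3 {A B C P : Type u} [AddCommGroup A] [Module k A] [AddCommGroup B] [Module k B]
    [AddCommGroup C] [Module k C] [AddCommGroup P] [Module k P]
    (f g : A ⊗[k] (B ⊗[k] C) →ₗ[k] P)
    (h : ∀ x y z, f (x ⊗ₜ[k] (y ⊗ₜ[k] z)) = g (x ⊗ₜ[k] (y ⊗ₜ[k] z))) : f = g := by
  apply TensorProduct.ext'
  intro x t
  induction t using TensorProduct.induction_on with
  | zero => simp [TensorProduct.tmul_zero]
  | tmul y z => exact h x y z
  | add s t hs ht => rw [TensorProduct.tmul_add, map_add, map_add, hs, ht]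

variable (ρV : H a →ₐ[k] Module.End k V) (l₁ l₂ : π)

/-- the triple left action of `H_α ⊗ H_{λ₁} ⊗ H_{λ₂}` on `V ⊗ (H_{λ₁} ⊗ H_{λ₂})` -/
noncomputable def Elin : (H a ⊗[k] (H l₁ ⊗[k] H l₂)) →ₗ[k]
    Module.End k (V ⊗[k] (H l₁ ⊗[k] H l₂)) :=
  pmapTens ρV.toLinearMap
    (pmapTens (Algebra.lmul k (H l₁)).toLinearMap (Algebra.lmul k (H l₂)).toLinearMap)

/-- the same triple action, as an algebra homomorphism -/
noncomputable def Ealg : (H a ⊗[k] (H l₁ ⊗[k] H l₂)) →ₐ[k]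
    Module.End k (V ⊗[k] (H l₁ ⊗[k] H l₂)) :=
  (Module.endTensorEndAlgHom (R := k) (S := k) (A := k)).comp
    (Algebra.TensorProduct.map ρV
      ((Module.endTensorEndAlgHom (R := k) (S := k) (A := k)).comp
        (Algebra.TensorProduct.map (Algebra.lmul k (H l₁)) (Algebra.lmul k (H l₂)))))

lemma Ealg_eq_Elin (u : H a ⊗[k] (H l₁ ⊗[k] H l₂)) : Ealg ρV l₁ l₂ u = Elin ρV l₁ l₂ u := by
  have : (Ealg ρV l₁ l₂ (V := V)).toLinearMap = Elin ρV l₁ l₂ := by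
    ext x y z
    simp [Ealg, Elin, Module.endTensorEndAlgHom_apply]
  exact congrFun (congrArg (fun f => f.toFun) this) u

lemma Elin_mul (u u' : H a ⊗[k] (H l₁ ⊗[k] H l₂)) :
    Elin ρV l₁ l₂ (V := V) (u * u') = Elin ρV l₁ l₂ u ∘ₗ Elin ρV l₁ l₂ u' := by
  rw [← Ealg_eq_Elin, ← Ealg_eq_Elin, ← Ealg_eq_Elin, map_mul]
  rfl

lemma Elin_one : Elin ρV l₁ l₂ (V := V) 1 = LinearMap.id := by
  rw [← Ealg_eq_Elin, map_one]
  rfl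

/-- right multiplication on the two `H`-legs of `V ⊗ (H_{λ₁} ⊗ H_{λ₂})` -/
noncomputable def Rmap : (H l₁ ⊗[k] H l₂) →ₗ[k]
    Module.End k (V ⊗[k] (H l₁ ⊗[k] H l₂)) :=
  pright V (pmapTens ((LinearMap.mul k (H l₁)).flip) ((LinearMap.mul k (H l₂)).flip))

lemma ERcomm (u : H a ⊗[k] (H l₁ ⊗[k] H l₂)) (w : H l₁ ⊗[k] H l₂) :
    Elin ρV l₁ l₂ (V := V) u ∘ₗ Rmap l₁ l₂ w = Rmap l₁ l₂ w ∘ₗ Elin ρV l₁ l₂ u := by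
  induction u using TensorProduct.induction_on with
  | zero => simp [map_zero]
  | add s t hs ht => simp only [map_add, LinearMap.add_comp, LinearMap.comp_add, hs, ht]
  | tmul p q =>
    induction q using TensorProduct.induction_on with
    | zero => simp [Elin, TensorProduct.tmul_zero, map_zero]
    | add s t hs ht =>
      simp only [Elin, TensorProduct.tmul_add, map_add, LinearMap.add_comp,
        LinearMap.comp_add] at hs ht ⊢
      rw [hs, ht]
    | tmul q₁ q₂ =>
      induction w using TensorProduct.induction_on with
      | zero => simp [map_zero]
      | add s t hs ht => simp only [map_add, LinearMap.add_comp, LinearMap.comp_add, hs, ht]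
      | tmul w₁ w₂ =>
        ext v b c
        simp [Elin, Rmap, Algebra.coe_lmul_eq_mul, mul_assoc]

end MainAux

section MainAux2
open QuasiTuraevGCoalgebra
variable {k : Type u} [Field k] {π : Type v} [Group π]
variable {H : π → Type u} [∀ a, Ring (H a)] [∀ a, Algebra k (H a)]
variable (T : QuasiTuraevGCoalgebra k H) {a : π} {V : Type u}
  [AddCommGroup V] [Module k V]
variable (ρV : H a →ₐ[k] Module.End k V) (coact : ∀ l : π, V →ₗ[k] V ⊗[k] H l)
variable (l₁ l₂ : π)

/-- the coaction `(id ⊗ Δ_{λ₁,λ₂}) ∘ ρ_{V,λ₁λ₂}` -/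
noncomputable def Xi : V →ₗ[k] V ⊗[k] (H l₁ ⊗[k] H l₂) :=
  (LinearMap.lTensor V (T.Δ l₁ l₂).toLinearMap) ∘ₗ coact (l₁ * l₂)

/-- the permutation `u¹ ⊗ u² ⊗ u³ ↦ u³ ⊗ u¹ ⊗ u²` -/
noncomputable def sigma0 {a : π} : (H l₁ ⊗[k] (H l₂ ⊗[k] H a)) →ₗ[k]
    (H a ⊗[k] (H l₁ ⊗[k] H l₂)) :=
  (LinearMap.lTensor (H a) (TensorProduct.comm k (H l₂) (H l₁)).toLinearMap) ∘ₗ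
    (TensorProduct.leftComm k (H l₂) (H a) (H l₁)).toLinearMap ∘ₗ
    (TensorProduct.assoc k (H l₂) (H a) (H l₁)).toLinearMap ∘ₗ
    (TensorProduct.comm k (H l₁) (H l₂ ⊗[k] H a)).toLinearMap

@[simp] lemma sigma0_tmul {a : π} (x : H l₁) (y : H l₂) (z : H a) :
    sigma0 l₁ l₂ (x ⊗ₜ[k] (y ⊗ₜ[k] z)) = z ⊗ₜ[k] (x ⊗ₜ[k] y) := by
  simp [sigma0, TensorProduct.leftComm]

/-- `SOf m (u¹ ⊗ u² ⊗ u³) = R(u¹ ⊗ u²) ∘ m ∘ ρ_V(u³)` -/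
noncomputable def SOf (m : V →ₗ[k] V ⊗[k] (H l₁ ⊗[k] H l₂)) :
    (H l₁ ⊗[k] (H l₂ ⊗[k] H a)) →ₗ[k]
      (V →ₗ[k] V ⊗[k] (H l₁ ⊗[k] H l₂)) :=
  (pcomp ((LinearMap.llcomp k V V (V ⊗[k] (H l₁ ⊗[k] H l₂)) m) ∘ₗ ρV.toLinearMap)
    (Rmap l₁ l₂)) ∘ₗ sigma0 l₁ l₂

@[simp] lemma SOf_tmul (m : V →ₗ[k] V ⊗[k] (H l₁ ⊗[k] H l₂))
    (x : H l₁) (y : H l₂) (z : H a) :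
    SOf ρV l₁ l₂ m (x ⊗ₜ[k] (y ⊗ₜ[k] z))
      = Rmap l₁ l₂ (x ⊗ₜ[k] y) ∘ₗ m ∘ₗ (ρV z : V →ₗ[k] V) := by
  simp [SOf]
  rfl

lemma ydRHS_decomp :
    ydCoassocRHS T ρV coact l₁ l₂
      = Elin ρV l₁ l₂ (T.Φinv a l₁ l₂) ∘ₗ
          (SOf ρV l₁ l₂ (Xi T coact l₁ l₂)) (T.Φinv l₁ l₂ a) := rfl

lemma Rmap_comp_Rmap (u₁ z₁ : H l₁) (u₂ z₂ : H l₂) :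
    Rmap (V := V) l₁ l₂ (u₁ ⊗ₜ[k] u₂) ∘ₗ Rmap l₁ l₂ (z₁ ⊗ₜ[k] z₂)
      = Rmap l₁ l₂ ((z₁ * u₁) ⊗ₜ[k] (z₂ * u₂)) := by
  ext v b c
  simp [Rmap, mul_assoc]

@[simp] lemma Rmap_one_one : Rmap (V := V) l₁ l₂ ((1 : H l₁) ⊗ₜ[k] (1 : H l₂))
    = LinearMap.id := by
  ext v b c
  simp [Rmap]

lemma SOf_merge (m : V →ₗ[k] V ⊗[k] (H l₁ ⊗[k] H l₂))
    (z : H l₁ ⊗[k] (H l₂ ⊗[k] H a)) (u₁ : H l₁) (u₂ : H l₂) (u₃ : H a) :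
    Rmap l₁ l₂ (u₁ ⊗ₜ[k] u₂) ∘ₗ SOf ρV l₁ l₂ m z ∘ₗ (ρV u₃ : V →ₗ[k] V)
      = SOf ρV l₁ l₂ m (z * (u₁ ⊗ₜ[k] (u₂ ⊗ₜ[k] u₃))) := by
  induction z using TensorProduct.induction_on with
  | zero => simp
  | add s t hs ht =>
    simp only [map_add, LinearMap.add_comp, LinearMap.comp_add, add_mul, hs, ht]
  | tmul z₁ q =>
    induction q using TensorProduct.induction_on with
    | zero => simp [TensorProduct.tmul_zero, zero_mul]
    | add s t hs ht =>
      simp only [TensorProduct.tmul_add, map_add, LinearMap.add_comp,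
        LinearMap.comp_add, add_mul, hs, ht]
    | tmul z₂ z₃ =>
      rw [Algebra.TensorProduct.tmul_mul_tmul, Algebra.TensorProduct.tmul_mul_tmul]
      rw [SOf_tmul, SOf_tmul, map_mul]
      rw [← LinearMap.comp_assoc, ← LinearMap.comp_assoc]
      rw [Rmap_comp_Rmap]
      simp only [LinearMap.comp_assoc]
      rfl

lemma SOf_one (m : V →ₗ[k] V ⊗[k] (H l₁ ⊗[k] H l₂)) :
    SOf ρV l₁ l₂ m (1 : H l₁ ⊗[k] (H l₂ ⊗[k] H a)) = m := by
  have h1 : (1 : H l₁ ⊗[k] (H l₂ ⊗[k] H a))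
      = (1 : H l₁) ⊗ₜ[k] ((1 : H l₂) ⊗ₜ[k] (1 : H a)) := by
    rw [Algebra.TensorProduct.one_def, Algebra.TensorProduct.one_def]
  rw [h1, SOf_tmul, Rmap_one_one, map_one]
  rfl

lemma SOf_ydRHS (u : H l₁ ⊗[k] (H l₂ ⊗[k] H a)) :
    SOf ρV l₁ l₂ (ydCoassocRHS T ρV coact l₁ l₂) u
      = Elin ρV l₁ l₂ (T.Φinv a l₁ l₂) ∘ₗ
          SOf ρV l₁ l₂ (Xi T coact l₁ l₂) (T.Φinv l₁ l₂ a * u) := by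
  induction u using TensorProduct.induction_on with
  | zero => simp
  | add s t hs ht => simp only [map_add, mul_add, LinearMap.comp_add, hs, ht]
  | tmul u₁ q =>
    induction q using TensorProduct.induction_on with
    | zero => simp [TensorProduct.tmul_zero, mul_zero]
    | add s t hs ht =>
      simp only [TensorProduct.tmul_add, map_add, mul_add, LinearMap.comp_add, hs, ht]
    | tmul u₂ u₃ =>
      rw [SOf_tmul, ydRHS_decomp T ρV coact l₁ l₂, ← SOf_merge]
      simp only [← LinearMap.comp_assoc]
      rw [← ERcomm]

lemma core_claim (hYD : T.IsYD ρV coact) :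
    Elin ρV l₁ l₂ (T.Φ a l₁ l₂) ∘ₗ
        (SOf ρV l₁ l₂ (ydCoassocLHS T ρV coact l₁ l₂)) (T.Φ l₁ l₂ a)
      = Xi T coact l₁ l₂ := by
  rw [hYD.2.1 l₁ l₂, SOf_ydRHS, T.Φinv_mul_Φ, SOf_one, ← LinearMap.comp_assoc,
    ← Elin_mul, T.Φ_mul_Φinv, Elin_one, LinearMap.id_comp]

end MainAux2

section MainAux3
open QuasiTuraevGCoalgebra
variable {k : Type u} [Field k] {π : Type v} [Group π]
variable {H : π → Type u} [∀ a, Ring (H a)] [∀ a, Algebra k (H a)]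
variable (T : QuasiTuraevGCoalgebra k H) {a : π} {V : Type u}
  [AddCommGroup V] [Module k V]
variable (ρV : H a →ₐ[k] Module.End k V) (coact : ∀ l : π, V →ₗ[k] V ⊗[k] H l)
variable (l₁ l₂ : π) (X₁ X₂ : Type u)
  [AddCommGroup X₁] [Module k X₁] [AddCommGroup X₂] [Module k X₂]
variable (ρ₁ : H l₁ →ₐ[k] Module.End k X₁) (ρ₂ : H l₂ →ₐ[k] Module.End k X₂)

/-- realize the pending legs: `(v ⊗ (b ⊗ c)) ⊗ (x₁ ⊗ x₂) ↦ v ⊗ (b·x₁ ⊗ c·x₂)` -/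
noncomputable def Gam :
    ((V ⊗[k] (H l₁ ⊗[k] H l₂)) ⊗[k] (X₁ ⊗[k] X₂)) →ₗ[k] (V ⊗[k] (X₁ ⊗[k] X₂)) :=
  LinearMap.lTensor V
      (TensorProduct.map (aev ρ₁) (aev ρ₂) ∘ₗ
        (TensorProduct.tensorTensorTensorComm k (H l₁) (H l₂) X₁ X₂).toLinearMap) ∘ₗ
    (TensorProduct.assoc k V (H l₁ ⊗[k] H l₂) (X₁ ⊗[k] X₂)).toLinearMap

@[simp] lemma Gam_tmul (v : V) (b : H l₁) (c : H l₂) (x₁ : X₁) (x₂ : X₂) :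
    Gam l₁ l₂ X₁ X₂ ρ₁ ρ₂ ((v ⊗ₜ[k] (b ⊗ₜ[k] c)) ⊗ₜ[k] (x₁ ⊗ₜ[k] x₂))
      = v ⊗ₜ[k] ((ρ₁ b x₁) ⊗ₜ[k] (ρ₂ c x₂)) := by
  simp [Gam, aev, TensorProduct.tensorTensorTensorComm, TensorProduct.tensorTensorTensorAssoc]

/-- `v ↦ v₍₀₎ ⊗ (b ⊗ v₍₁,λ₂₎ c)` on pending legs -/
noncomputable def gtwo : (V ⊗[k] (H l₁ ⊗[k] H l₂)) →ₗ[k] (V ⊗[k] (H l₁ ⊗[k] H l₂)) :=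
  LinearMap.lTensor V
      ((LinearMap.lTensor (H l₁) (LinearMap.mul' k (H l₂))) ∘ₗ
        (TensorProduct.leftComm k (H l₂) (H l₁) (H l₂)).toLinearMap) ∘ₗ
    (TensorProduct.assoc k V (H l₂) (H l₁ ⊗[k] H l₂)).toLinearMap ∘ₗ
    LinearMap.rTensor (H l₁ ⊗[k] H l₂) (coact l₂)

/-- `v ↦ v₍₀₎ ⊗ (v₍₁,λ₁₎ b ⊗ c)` on pending legs -/
noncomputable def gfour : (V ⊗[k] (H l₁ ⊗[k] H l₂)) →ₗ[k] (V ⊗[k] (H l₁ ⊗[k] H l₂)) :=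
  LinearMap.lTensor V
      ((LinearMap.rTensor (H l₂) (LinearMap.mul' k (H l₁))) ∘ₗ
        (TensorProduct.assoc k (H l₁) (H l₁) (H l₂)).symm.toLinearMap) ∘ₗ
    (TensorProduct.assoc k V (H l₁) (H l₁ ⊗[k] H l₂)).toLinearMap ∘ₗ
    LinearMap.rTensor (H l₁ ⊗[k] H l₂) (coact l₁)

lemma gtwo_tmul (v : V) (b : H l₁) (c : H l₂) (v' : V) (w : H l₂)
    (h : coact l₂ v = v' ⊗ₜ[k] w) :
    gtwo coact l₁ l₂ (v ⊗ₜ[k] (b ⊗ₜ[k] c)) = v' ⊗ₜ[k] (b ⊗ₜ[k] (w * c)) := by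
  simp [gtwo, h, TensorProduct.leftComm]

lemma gfour_tmul (v : V) (b : H l₁) (c : H l₂) (v' : V) (w : H l₁)
    (h : coact l₁ v = v' ⊗ₜ[k] w) :
    gfour coact l₁ l₂ (v ⊗ₜ[k] (b ⊗ₜ[k] c)) = v' ⊗ₜ[k] ((w * b) ⊗ₜ[k] c) := by
  simp [gfour, h]

/-- the parameterized action `y¹ ⊗ (y² ⊗ y³) ↦ (v⊗(b⊗c) ↦ y²v ⊗ (y¹b ⊗ y³c))` -/
noncomputable def Gmap : (H l₁ ⊗[k] (H a ⊗[k] H l₂)) →ₗ[k]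
    Module.End k (V ⊗[k] (H l₁ ⊗[k] H l₂)) :=
  pparam (TensorProduct.leftComm k (H l₁) (H a) (H l₂)).toLinearMap (Elin ρV l₁ l₂)

@[simp] lemma Gmap_tmul (y₁ : H l₁) (y₂ : H a) (y₃ : H l₂) (v : V) (b : H l₁) (c : H l₂) :
    Gmap ρV l₁ l₂ (y₁ ⊗ₜ[k] (y₂ ⊗ₜ[k] y₃)) (v ⊗ₜ[k] (b ⊗ₜ[k] c))
      = (ρV y₂ v) ⊗ₜ[k] ((y₁ * b) ⊗ₜ[k] (y₃ * c)) := by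
  simp [Gmap, Elin, TensorProduct.leftComm, Algebra.coe_lmul_eq_mul]

/-- the parameterized "prepare" map `u ↦ (v ↦ ρ_V(u³) v ⊗ (u¹ ⊗ u²))` -/
noncomputable def PiM : (H l₁ ⊗[k] (H l₂ ⊗[k] H a)) →ₗ[k]
    (V →ₗ[k] V ⊗[k] (H l₁ ⊗[k] H l₂)) :=
  pparam (sigma0 l₁ l₂) (pcomp ρV.toLinearMap ((TensorProduct.mk k V (H l₁ ⊗[k] H l₂)).flip))

@[simp] lemma PiM_tmul (u₁ : H l₁) (u₂ : H l₂) (u₃ : H a) (v : V) :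
    PiM ρV l₁ l₂ (u₁ ⊗ₜ[k] (u₂ ⊗ₜ[k] u₃)) v = (ρV u₃ v) ⊗ₜ[k] (u₁ ⊗ₜ[k] u₂) := by
  simp [PiM]

/-- `s₁ : v ⊗ (x₁ ⊗ x₂) ↦ x₁ ⊗ (x₂ ⊗ v)` -/
noncomputable def sOne : (V ⊗[k] (X₁ ⊗[k] X₂)) →ₗ[k] (X₁ ⊗[k] (X₂ ⊗[k] V)) :=
  (TensorProduct.assoc k X₁ X₂ V).toLinearMap ∘ₗ
    (TensorProduct.comm k V (X₁ ⊗[k] X₂)).toLinearMap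

/-- `s₂ : v ⊗ (x₁ ⊗ x₂) ↦ x₁ ⊗ (v ⊗ x₂)` -/
noncomputable def sTwo : (V ⊗[k] (X₁ ⊗[k] X₂)) →ₗ[k] (X₁ ⊗[k] (V ⊗[k] X₂)) :=
  (TensorProduct.leftComm k V X₁ X₂).toLinearMap

/-- `s₃ : v ⊗ (x₁ ⊗ x₂) ↦ (x₁ ⊗ v) ⊗ x₂` -/
noncomputable def sThree : (V ⊗[k] (X₁ ⊗[k] X₂)) →ₗ[k] ((X₁ ⊗[k] V) ⊗[k] X₂) :=
  (TensorProduct.assoc k X₁ V X₂).symm.toLinearMap ∘ₗ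
    (TensorProduct.leftComm k V X₁ X₂).toLinearMap

/-- `s₄ : v ⊗ (x₁ ⊗ x₂) ↦ (v ⊗ x₁) ⊗ x₂` -/
noncomputable def sFour : (V ⊗[k] (X₁ ⊗[k] X₂)) →ₗ[k] ((V ⊗[k] X₁) ⊗[k] X₂) :=
  (TensorProduct.assoc k V X₁ X₂).symm.toLinearMap

@[simp] lemma sOne_tmul (v : V) (x₁ : X₁) (x₂ : X₂) :
    sOne X₁ X₂ (v ⊗ₜ[k] (x₁ ⊗ₜ[k] x₂)) = x₁ ⊗ₜ[k] (x₂ ⊗ₜ[k] v) := by simp [sOne]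
@[simp] lemma sTwo_tmul (v : V) (x₁ : X₁) (x₂ : X₂) :
    sTwo X₁ X₂ (v ⊗ₜ[k] (x₁ ⊗ₜ[k] x₂)) = x₁ ⊗ₜ[k] (v ⊗ₜ[k] x₂) := by
  simp [sTwo, TensorProduct.leftComm]
@[simp] lemma sThree_tmul (v : V) (x₁ : X₁) (x₂ : X₂) :
    sThree X₁ X₂ (v ⊗ₜ[k] (x₁ ⊗ₜ[k] x₂)) = (x₁ ⊗ₜ[k] v) ⊗ₜ[k] x₂ := by
  simp [sThree, TensorProduct.leftComm]
@[simp] lemma sFour_tmul (v : V) (x₁ : X₁) (x₂ : X₂) :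
    sFour X₁ X₂ (v ⊗ₜ[k] (x₁ ⊗ₜ[k] x₂)) = (v ⊗ₜ[k] x₁) ⊗ₜ[k] x₂ := by simp [sFour]

end MainAux3

section MainAux4
open QuasiTuraevGCoalgebra
variable {k : Type u} [Field k] {π : Type v} [Group π]
variable {H : π → Type u} [∀ a, Ring (H a)] [∀ a, Algebra k (H a)]
variable (T : QuasiTuraevGCoalgebra k H) {a : π} {V : Type u}
  [AddCommGroup V] [Module k V]
variable (ρV : H a →ₐ[k] Module.End k V) (coact : ∀ l : π, V →ₗ[k] V ⊗[k] H l)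
variable (l₁ l₂ : π) (X₁ X₂ : Type u)
  [AddCommGroup X₁] [Module k X₁] [AddCommGroup X₂] [Module k X₂]
variable (ρ₁ : H l₁ →ₐ[k] Module.End k X₁) (ρ₂ : H l₂ →ₐ[k] Module.End k X₂)

lemma pmapTens_precomp {A A' B B' M N M' N' : Type u}
    [AddCommGroup A] [Module k A] [AddCommGroup A'] [Module k A']
    [AddCommGroup B] [Module k B] [AddCommGroup B'] [Module k B']
    [AddCommGroup M] [Module k M] [AddCommGroup N] [Module k N]
    [AddCommGroup M'] [Module k M'] [AddCommGroup N'] [Module k N']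
    (f : A →ₗ[k] M →ₗ[k] N) (σ : A' →ₗ[k] A)
    (g : B →ₗ[k] M' →ₗ[k] N') (τ : B' →ₗ[k] B) :
    pmapTens (f ∘ₗ σ) (g ∘ₗ τ) = pmapTens f g ∘ₗ TensorProduct.map σ τ := by
  unfold pmapTens
  rw [TensorProduct.map_comp, LinearMap.comp_assoc]

lemma conj_toLin {l : π} {X : Type u} [AddCommGroup X] [Module k X]
    (ρX : H l →ₐ[k] Module.End k X) (b : π) :
    (T.conjAlg ρX b).toLinearMap = ρX.toLinearMap ∘ₗ chiL T b l := by
  unfold QuasiTuraevGCoalgebra.conjAlg chiL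
  rw [AlgHom.comp_toLinearMap, AlgHom.comp_toLinearMap, castA_toLinearMap,
    LinearMap.comp_assoc]
  rfl

lemma Cv1 : T.assocMod (T.conjAlg ρ₁ a) (T.conjAlg ρ₂ a) ρV
    = pmapTens ρ₁.toLinearMap (pmapTens ρ₂.toLinearMap ρV.toLinearMap)
        (T.Φ l₁ l₂ a) ∘ₗ (TensorProduct.assoc k X₁ X₂ V).toLinearMap := by
  unfold QuasiTuraevGCoalgebra.assocMod
  congr 1
  rw [conj_toLin, conj_toLin]
  have h2 : pmapTens (ρ₂.toLinearMap ∘ₗ chiL T a l₂) ρV.toLinearMap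
      = pmapTens ρ₂.toLinearMap ρV.toLinearMap ∘ₗ
          TensorProduct.map (chiL T a l₂) LinearMap.id := by
    rw [← pmapTens_precomp, LinearMap.comp_id]
  rw [h2]
  have h1 := pmapTens_precomp (k := k)
    ρ₁.toLinearMap (chiL T a l₁)
    (pmapTens ρ₂.toLinearMap ρV.toLinearMap)
    (TensorProduct.map (chiL T a l₂) LinearMap.id)
  rw [h1, LinearMap.comp_apply, N1]

lemma Cv3 : T.assocModInv (T.conjAlg ρ₁ a) ρV ρ₂
    = (TensorProduct.assoc k X₁ V X₂).symm.toLinearMap ∘ₗ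
        pmapTens ρ₁.toLinearMap (pmapTens ρV.toLinearMap ρ₂.toLinearMap)
          (T.Φinv l₁ a l₂) := by
  unfold QuasiTuraevGCoalgebra.assocModInv
  congr 1
  rw [conj_toLin]
  have h1 : pmapTens (ρ₁.toLinearMap ∘ₗ chiL T a l₁)
        (pmapTens ρV.toLinearMap ρ₂.toLinearMap)
      = pmapTens ρ₁.toLinearMap (pmapTens ρV.toLinearMap ρ₂.toLinearMap) ∘ₗ
          TensorProduct.map (chiL T a l₁) LinearMap.id := by
    rw [← pmapTens_precomp, LinearMap.comp_id]
  rw [h1, LinearMap.comp_apply, N2]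

end MainAux4

section MainAux5
open QuasiTuraevGCoalgebra
variable {k : Type u} [Field k] {π : Type v} [Group π]
variable {H : π → Type u} [∀ a, Ring (H a)] [∀ a, Algebra k (H a)]
variable (T : QuasiTuraevGCoalgebra k H) {a : π} {V : Type u}
  [AddCommGroup V] [Module k V]
variable (ρV : H a →ₐ[k] Module.End k V) (coact : ∀ l : π, V →ₗ[k] V ⊗[k] H l)
variable (l₁ l₂ : π) (X₁ X₂ : Type u)
  [AddCommGroup X₁] [Module k X₁] [AddCommGroup X₂] [Module k X₂]
variable (ρ₁ : H l₁ →ₐ[k] Module.End k X₁) (ρ₂ : H l₂ →ₐ[k] Module.End k X₂)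

lemma St1 : T.assocMod (T.conjAlg ρ₁ a) (T.conjAlg ρ₂ a) ρV
    = sOne X₁ X₂ ∘ₗ Gam l₁ l₂ X₁ X₂ ρ₁ ρ₂ ∘ₗ
        LinearMap.rTensor (X₁ ⊗[k] X₂) (PiM ρV l₁ l₂ (T.Φ l₁ l₂ a)) ∘ₗ
        (TensorProduct.comm k (X₁ ⊗[k] X₂) V).toLinearMap := by
  rw [Cv1]
  ext x₁ x₂ v
  simp only [LinearMap.comp_apply, LinearMap.coe_comp, Function.comp_apply,
    TensorProduct.AlgebraTensorModule.curry_apply, TensorProduct.curry_apply,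
    LinearMap.coe_restrictScalars, LinearEquiv.coe_coe, TensorProduct.assoc_tmul,
    TensorProduct.comm_tmul, LinearMap.rTensor_tmul]
  generalize T.Φ l₁ l₂ a = u
  induction u using TensorProduct.induction_on with
  | zero => simp
  | add s t hs ht =>
    simp only [map_add, LinearMap.add_apply, TensorProduct.add_tmul, hs, ht]
  | tmul u₁ q =>
    induction q using TensorProduct.induction_on with
    | zero => simp [TensorProduct.tmul_zero]
    | add s t hs ht =>
      simp only [TensorProduct.tmul_add, map_add, LinearMap.add_apply,
        TensorProduct.add_tmul, hs, ht]
    | tmul u₂ u₃ =>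
      simp

lemma St5 : T.assocMod ρV ρ₁ ρ₂ ∘ₗ sFour X₁ X₂ ∘ₗ Gam l₁ l₂ X₁ X₂ ρ₁ ρ₂
    = Gam l₁ l₂ X₁ X₂ ρ₁ ρ₂ ∘ₗ
        LinearMap.rTensor (X₁ ⊗[k] X₂) (Elin ρV l₁ l₂ (T.Φ a l₁ l₂)) := by
  unfold QuasiTuraevGCoalgebra.assocMod
  ext v b c x₁ x₂
  simp only [LinearMap.comp_apply, LinearMap.coe_comp, Function.comp_apply,
    TensorProduct.AlgebraTensorModule.curry_apply, TensorProduct.curry_apply,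
    LinearMap.coe_restrictScalars, LinearEquiv.coe_coe, Gam_tmul, sFour_tmul,
    TensorProduct.assoc_tmul, LinearMap.rTensor_tmul]
  generalize T.Φ a l₁ l₂ = p
  induction p using TensorProduct.induction_on with
  | zero => simp
  | add s t hs ht =>
    simp only [map_add, LinearMap.add_apply, TensorProduct.add_tmul, hs, ht]
  | tmul p₁ q =>
    induction q using TensorProduct.induction_on with
    | zero => simp [TensorProduct.tmul_zero]
    | add s t hs ht =>
      simp only [TensorProduct.tmul_add, map_add, LinearMap.add_apply,
        TensorProduct.add_tmul, hs, ht]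
    | tmul p₂ p₃ =>
      simp [Elin, Algebra.coe_lmul_eq_mul, map_mul, Module.End.mul_apply]

lemma St2 : LinearMap.lTensor X₁ (ydBraidInv coact ρ₂) ∘ₗ sOne X₁ X₂ ∘ₗ
      Gam l₁ l₂ X₁ X₂ ρ₁ ρ₂
    = sTwo X₁ X₂ ∘ₗ Gam l₁ l₂ X₁ X₂ ρ₁ ρ₂ ∘ₗ
        LinearMap.rTensor (X₁ ⊗[k] X₂) (gtwo coact l₁ l₂) := by
  ext v b c x₁ x₂
  simp only [LinearMap.comp_apply, LinearMap.coe_comp, Function.comp_apply,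
    TensorProduct.AlgebraTensorModule.curry_apply, TensorProduct.curry_apply,
    LinearMap.coe_restrictScalars, LinearEquiv.coe_coe, Gam_tmul, sOne_tmul,
    LinearMap.lTensor_tmul, LinearMap.rTensor_tmul, ydBraidInv, gtwo,
    TensorProduct.comm_tmul, TensorProduct.assoc_tmul]
  generalize coact l₂ v = t
  induction t using TensorProduct.induction_on with
  | zero => simp
  | add s t hs ht =>
    simp only [map_add, LinearMap.add_apply, TensorProduct.add_tmul,
      TensorProduct.tmul_add, hs, ht]
  | tmul w₀ w₁ =>
    simp [aev, TensorProduct.leftComm, map_mul, Module.End.mul_apply]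

lemma St4 : LinearMap.rTensor X₂ (ydBraidInv coact ρ₁) ∘ₗ sThree X₁ X₂ ∘ₗ
      Gam l₁ l₂ X₁ X₂ ρ₁ ρ₂
    = sFour X₁ X₂ ∘ₗ Gam l₁ l₂ X₁ X₂ ρ₁ ρ₂ ∘ₗ
        LinearMap.rTensor (X₁ ⊗[k] X₂) (gfour coact l₁ l₂) := by
  ext v b c x₁ x₂
  simp only [LinearMap.comp_apply, LinearMap.coe_comp, Function.comp_apply,
    TensorProduct.AlgebraTensorModule.curry_apply, TensorProduct.curry_apply,
    LinearMap.coe_restrictScalars, LinearEquiv.coe_coe, Gam_tmul, sThree_tmul,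
    LinearMap.lTensor_tmul, LinearMap.rTensor_tmul, ydBraidInv, gfour,
    TensorProduct.comm_tmul, TensorProduct.assoc_tmul]
  generalize coact l₁ v = t
  induction t using TensorProduct.induction_on with
  | zero => simp
  | add s t hs ht =>
    simp only [map_add, LinearMap.add_apply, TensorProduct.add_tmul,
      TensorProduct.tmul_add, hs, ht]
  | tmul w₀ w₁ =>
    simp [aev, map_mul, Module.End.mul_apply]

lemma St3 : T.assocModInv (T.conjAlg ρ₁ a) ρV ρ₂ ∘ₗ sTwo X₁ X₂ ∘ₗ
      Gam l₁ l₂ X₁ X₂ ρ₁ ρ₂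
    = sThree X₁ X₂ ∘ₗ Gam l₁ l₂ X₁ X₂ ρ₁ ρ₂ ∘ₗ
        LinearMap.rTensor (X₁ ⊗[k] X₂) (Gmap ρV l₁ l₂ (T.Φinv l₁ a l₂)) := by
  rw [Cv3]
  ext v b c x₁ x₂
  simp only [LinearMap.comp_apply, LinearMap.coe_comp, Function.comp_apply,
    TensorProduct.AlgebraTensorModule.curry_apply, TensorProduct.curry_apply,
    LinearMap.coe_restrictScalars, LinearEquiv.coe_coe, Gam_tmul, sTwo_tmul,
    LinearMap.rTensor_tmul]
  generalize T.Φinv l₁ a l₂ = y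
  induction y using TensorProduct.induction_on with
  | zero => simp
  | add s t hs ht =>
    simp only [map_add, LinearMap.add_apply, TensorProduct.add_tmul, hs, ht]
  | tmul y₁ q =>
    induction q using TensorProduct.induction_on with
    | zero => simp [TensorProduct.tmul_zero]
    | add s t hs ht =>
      simp only [TensorProduct.tmul_add, map_add, LinearMap.add_apply,
        TensorProduct.add_tmul, hs, ht]
    | tmul y₂ y₃ =>
      simp [map_mul, Module.End.mul_apply]

end MainAux5

section MainAux6
set_option synthInstance.maxHeartbeats 1000000
open QuasiTuraevGCoalgebra
variable {k : Type u} [Field k] {π : Type v} [Group π]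
variable {H : π → Type u} [∀ a, Ring (H a)] [∀ a, Algebra k (H a)]
variable (T : QuasiTuraevGCoalgebra k H) {a : π} {V : Type u}
  [AddCommGroup V] [Module k V]
variable (ρV : H a →ₐ[k] Module.End k V) (coact : ∀ l : π, V →ₗ[k] V ⊗[k] H l)
variable (l₁ l₂ : π) (X₁ X₂ : Type u)
  [AddCommGroup X₁] [Module k X₁] [AddCommGroup X₂] [Module k X₂]
variable (ρ₁ : H l₁ →ₐ[k] Module.End k X₁) (ρ₂ : H l₂ →ₐ[k] Module.End k X₂)

lemma C3a (u : H l₁ ⊗[k] (H l₂ ⊗[k] H a)) :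
    gfour coact l₁ l₂ ∘ₗ Gmap ρV l₁ l₂ (T.Φinv l₁ a l₂) ∘ₗ gtwo coact l₁ l₂ ∘ₗ
        PiM ρV l₁ l₂ u
      = SOf ρV l₁ l₂ (ydCoassocLHS T ρV coact l₁ l₂) u := by
  induction u using TensorProduct.induction_on with
  | zero => simp
  | add s t hs ht => simp only [map_add, LinearMap.comp_add, hs, ht]
  | tmul u₁ q =>
    induction q using TensorProduct.induction_on with
    | zero => simp [TensorProduct.tmul_zero]
    | add s t hs ht =>
      simp only [TensorProduct.tmul_add, map_add, LinearMap.comp_add, hs, ht]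
    | tmul u₂ u₃ =>
      apply LinearMap.ext; intro v
      simp only [LinearMap.comp_apply, PiM_tmul, SOf_tmul,
        QuasiTuraevGCoalgebra.ydCoassocLHS, pparam_apply]
      generalize T.Φinv l₁ a l₂ = y
      induction y using TensorProduct.induction_on with
      | zero => simp
      | add s t hs ht =>
        simp only [map_add, LinearMap.add_apply, hs, ht]
      | tmul y₁ q =>
        induction q using TensorProduct.induction_on with
        | zero => simp [TensorProduct.tmul_zero]
        | add s t hs ht =>
          simp only [TensorProduct.tmul_add, map_add, LinearMap.add_apply, hs, ht]
        | tmul y₂ y₃ =>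
          simp only [gtwo, LinearMap.comp_apply, LinearMap.rTensor_tmul,
            LinearEquiv.coe_coe, TensorProduct.leftComm_tmul,
            TensorProduct.assoc_symm_tmul]
          generalize coact l₂ ((ρV u₃) v) = t
          induction t using TensorProduct.induction_on with
          | zero => simp
          | add s t hs ht =>
            simp only [map_add, LinearMap.add_apply, TensorProduct.add_tmul,
              TensorProduct.tmul_add, hs, ht]
          | tmul w₀ w₁ =>
            simp only [TensorProduct.assoc_tmul, LinearMap.lTensor_tmul,
              LinearMap.comp_apply, TensorProduct.leftComm_tmul,
              LinearMap.mul'_apply, Gmap_tmul, gfour, LinearMap.rTensor_tmul,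
              LinearEquiv.coe_coe, pmapTens_tmul, pcomp_tmul, pright_apply,
              TensorProduct.map_tmul, LinearMap.llcomp_apply,
              AlgHom.toLinearMap_apply, LinearMap.flip_apply,
              LinearMap.mul_apply', TensorProduct.assoc_symm_tmul]
            generalize coact l₁ ((ρV y₂) w₀) = t'
            induction t' using TensorProduct.induction_on with
            | zero => simp
            | add s t hs ht =>
              simp only [map_add, LinearMap.add_apply, TensorProduct.add_tmul,
                TensorProduct.tmul_add, hs, ht]
            | tmul z₀ z₁ =>
              simp [Rmap, mul_assoc]

lemma coreAll (hYD : T.IsYD ρV coact) :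
    Elin ρV l₁ l₂ (T.Φ a l₁ l₂) ∘ₗ gfour coact l₁ l₂ ∘ₗ
        Gmap ρV l₁ l₂ (T.Φinv l₁ a l₂) ∘ₗ gtwo coact l₁ l₂ ∘ₗ
        PiM ρV l₁ l₂ (T.Φ l₁ l₂ a)
      = Xi T coact l₁ l₂ := by
  rw [C3a]
  exact core_claim T ρV coact l₁ l₂ hYD

lemma L1 : ydBraidInv coact (T.tensAlg ρ₁ ρ₂)
    = Gam l₁ l₂ X₁ X₂ ρ₁ ρ₂ ∘ₗ
        LinearMap.rTensor (X₁ ⊗[k] X₂) (Xi T coact l₁ l₂) ∘ₗ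
        (TensorProduct.comm k (X₁ ⊗[k] X₂) V).toLinearMap := by
  ext x₁ x₂ v
  simp only [LinearMap.comp_apply, LinearMap.coe_comp, Function.comp_apply,
    TensorProduct.AlgebraTensorModule.curry_apply, TensorProduct.curry_apply,
    LinearMap.coe_restrictScalars, LinearEquiv.coe_coe, ydBraidInv, Xi,
    TensorProduct.comm_tmul, LinearMap.rTensor_tmul]
  generalize coact (l₁ * l₂) v = t
  induction t using TensorProduct.induction_on with
  | zero => simp
  | add s t hs ht =>
    simp only [map_add, LinearMap.add_apply, TensorProduct.add_tmul, hs, ht]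
  | tmul v' h =>
    simp only [TensorProduct.assoc_tmul, LinearMap.lTensor_tmul, aev,
      TensorProduct.lift.tmul, AlgHom.toLinearMap_apply,
      QuasiTuraevGCoalgebra.tensAlg, AlgHom.comp_apply]
    generalize (T.Δ l₁ l₂) h = d
    induction d using TensorProduct.induction_on with
    | zero => simp
    | add s t hs ht =>
      simp only [map_add, LinearMap.add_apply, TensorProduct.tmul_add,
        TensorProduct.add_tmul, hs, ht]
    | tmul b c =>
      simp [Module.endTensorEndAlgHom_apply]

end MainAux6

section Statements
variable {k : Type u} [Field k] {π : Type v} [Group π]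
variable {H : π → Type u} [∀ a, Ring (H a)] [∀ a, Algebra k (H a)]
open QuasiTuraevGCoalgebra


/-- The half-braiding induced by a Yetter-Drinfeld coaction satisfies the
hexagon identity (stated for the inverses `c⁻¹ = ĉ`). -/
theorem stmt13 (T : QuasiTuraevGCoalgebra k H) {a : π} {V : Type u}
    [AddCommGroup V] [Module k V]
    (ρV : H a →ₐ[k] Module.End k V) (coact : ∀ l : π, V →ₗ[k] V ⊗[k] H l)
    (hYD : T.IsYD ρV coact) (l₁ l₂ : π) (X₁ X₂ : Type u)
    [AddCommGroup X₁] [Module k X₁] [AddCommGroup X₂] [Module k X₂]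
    (ρ₁ : H l₁ →ₐ[k] Module.End k X₁) (ρ₂ : H l₂ →ₐ[k] Module.End k X₂) :
    ydBraidInv coact (T.tensAlg ρ₁ ρ₂)
      = T.assocMod ρV ρ₁ ρ₂ ∘ₗ
        LinearMap.rTensor X₂ (ydBraidInv coact ρ₁) ∘ₗ
        T.assocModInv (T.conjAlg ρ₁ a) ρV ρ₂ ∘ₗ
        LinearMap.lTensor X₁ (ydBraidInv coact ρ₂) ∘ₗ
        T.assocMod (T.conjAlg ρ₁ a) (T.conjAlg ρ₂ a) ρV := by
  rw [L1 T coact l₁ l₂ X₁ X₂ ρ₁ ρ₂, St1 T ρV l₁ l₂ X₁ X₂ ρ₁ ρ₂]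
  apply LinearMap.ext; intro ω
  simp only [LinearMap.comp_apply, LinearEquiv.coe_coe]
  have h2 := LinearMap.congr_fun (St2 coact l₁ l₂ X₁ X₂ ρ₁ ρ₂)
    ((LinearMap.rTensor (X₁ ⊗[k] X₂) (PiM ρV l₁ l₂ (T.Φ l₁ l₂ a)))
      ((TensorProduct.comm k (X₁ ⊗[k] X₂) V) ω))
  simp only [LinearMap.comp_apply] at h2
  rw [h2]
  have h3 := LinearMap.congr_fun (St3 T ρV l₁ l₂ X₁ X₂ ρ₁ ρ₂)
    ((LinearMap.rTensor (X₁ ⊗[k] X₂) (gtwo coact l₁ l₂))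
      ((LinearMap.rTensor (X₁ ⊗[k] X₂) (PiM ρV l₁ l₂ (T.Φ l₁ l₂ a)))
        ((TensorProduct.comm k (X₁ ⊗[k] X₂) V) ω)))
  simp only [LinearMap.comp_apply] at h3
  rw [h3]
  have h4 := LinearMap.congr_fun (St4 coact l₁ l₂ X₁ X₂ ρ₁ ρ₂)
    ((LinearMap.rTensor (X₁ ⊗[k] X₂) (Gmap ρV l₁ l₂ (T.Φinv l₁ a l₂)))
      ((LinearMap.rTensor (X₁ ⊗[k] X₂) (gtwo coact l₁ l₂))
        ((LinearMap.rTensor (X₁ ⊗[k] X₂) (PiM ρV l₁ l₂ (T.Φ l₁ l₂ a)))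
          ((TensorProduct.comm k (X₁ ⊗[k] X₂) V) ω))))
  simp only [LinearMap.comp_apply] at h4
  rw [h4]
  have h5 := LinearMap.congr_fun (St5 T ρV l₁ l₂ X₁ X₂ ρ₁ ρ₂)
    ((LinearMap.rTensor (X₁ ⊗[k] X₂) (gfour coact l₁ l₂))
      ((LinearMap.rTensor (X₁ ⊗[k] X₂) (Gmap ρV l₁ l₂ (T.Φinv l₁ a l₂)))
        ((LinearMap.rTensor (X₁ ⊗[k] X₂) (gtwo coact l₁ l₂))
          ((LinearMap.rTensor (X₁ ⊗[k] X₂) (PiM ρV l₁ l₂ (T.Φ l₁ l₂ a)))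
            ((TensorProduct.comm k (X₁ ⊗[k] X₂) V) ω)))))
  simp only [LinearMap.comp_apply] at h5
  rw [h5]
  have hr : LinearMap.rTensor (X₁ ⊗[k] X₂) (Elin ρV l₁ l₂ (T.Φ a l₁ l₂)) ∘ₗ
        LinearMap.rTensor (X₁ ⊗[k] X₂) (gfour coact l₁ l₂) ∘ₗ
        LinearMap.rTensor (X₁ ⊗[k] X₂) (Gmap ρV l₁ l₂ (T.Φinv l₁ a l₂)) ∘ₗ
        LinearMap.rTensor (X₁ ⊗[k] X₂) (gtwo coact l₁ l₂) ∘ₗ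
        LinearMap.rTensor (X₁ ⊗[k] X₂) (PiM ρV l₁ l₂ (T.Φ l₁ l₂ a))
      = LinearMap.rTensor (X₁ ⊗[k] X₂) (Xi T coact l₁ l₂) := by
    rw [← LinearMap.rTensor_comp, ← LinearMap.rTensor_comp, ← LinearMap.rTensor_comp,
      ← LinearMap.rTensor_comp, coreAll T ρV coact l₁ l₂ hYD]
  have hrw := LinearMap.congr_fun hr ((TensorProduct.comm k (X₁ ⊗[k] X₂) V) ω)
  simp only [LinearMap.comp_apply] at hrw
  rw [hrw]


end Statements
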